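/- arXiv:1902.08725 — 12 statements merged into one kernel-verified Lean document; each statement's English description precedes it below -/
import Mathlib

section
/- Let G be a group, let λ : G →* Equiv.Perm G be the left regular representation (λ(g) is the permutation x ↦ g * x), let L be the range of λ, and let N be the normalizer of L in Equiv.Perm G. Then there exists a surjective group homomorphism R : N →* MulAut G such that for every φ ∈ N and every g ∈ G one has λ(R(φ)(g)) = φ * λ(g) * φ⁻¹, and moreover for every u ∈ G, R(λ(u)) is the inner automorphism given by conjugation by u (so R maps L onto the group of inner automorphisms of G). -/
namespace Stmt0Aux
variable {G : Type*} [Group G]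

lemma lam_apply (g x : G) : MulAction.toPermHom G G g x = g * x := rfl

lemma lam_inj (a b : G) (h : MulAction.toPermHom G G a = MulAction.toPermHom G G b) :
    a = b := by
  have := congrArg (fun e : Equiv.Perm G => e 1) h
  simpa [lam_apply] using this

/-- the underlying function of R φ -/
def F (φ : Equiv.Perm G) (g : G) : G := (φ * MulAction.toPermHom G G g * φ⁻¹) 1

lemma lam_F {φ : Equiv.Perm G} (hφ : φ ∈ Subgroup.normalizer ((MulAction.toPermHom G G).range : Set (Equiv.Perm G))) (g : G) :
    MulAction.toPermHom G G (F φ g) = φ * MulAction.toPermHom G G g * φ⁻¹ := by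
  have hmem : φ * MulAction.toPermHom G G g * φ⁻¹ ∈ (MulAction.toPermHom G G).range :=
    (Subgroup.mem_normalizer_iff.mp hφ (MulAction.toPermHom G G g)).mp
      (MonoidHom.mem_range.mpr ⟨g, rfl⟩)
  obtain ⟨k, hk⟩ := hmem
  have hk1 : F φ g = k := by
    have := congrArg (fun e : Equiv.Perm G => e 1) hk
    simpa [F, lam_apply] using this.symm
  rw [hk1, hk]

def Rfun (φ : Subgroup.normalizer ((MulAction.toPermHom G G).range : Set (Equiv.Perm G))) : MulAut G where
  toFun := F (φ : Equiv.Perm G)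
  invFun := F ((φ : Equiv.Perm G)⁻¹)
  left_inv := by
    intro g
    apply lam_inj
    rw [lam_F (Subgroup.inv_mem _ φ.2), lam_F φ.2]
    group
  right_inv := by
    intro g
    apply lam_inj
    rw [lam_F φ.2, lam_F (Subgroup.inv_mem _ φ.2)]
    group
  map_mul' := by
    intro a b
    apply lam_inj
    rw [map_mul (MulAction.toPermHom G G), lam_F φ.2, lam_F φ.2, lam_F φ.2,
      map_mul (MulAction.toPermHom G G)]
    group

lemma Rfun_apply (φ : Subgroup.normalizer ((MulAction.toPermHom G G).range : Set (Equiv.Perm G))) (g : G) :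
    Rfun φ g = F (φ : Equiv.Perm G) g := rfl

def R : Subgroup.normalizer ((MulAction.toPermHom G G).range : Set (Equiv.Perm G)) →* MulAut G where
  toFun := Rfun
  map_one' := by
    ext g
    apply lam_inj
    rw [show ((1 : MulAut G) g) = g from rfl, Rfun_apply, OneMemClass.coe_one,
      lam_F (Subgroup.one_mem _ : (1 : Equiv.Perm G) ∈ _)]
    simp
  map_mul' := by
    intro a b
    ext g
    apply lam_inj
    show MulAction.toPermHom G G (Rfun (a * b) g) =
      MulAction.toPermHom G G (Rfun a (Rfun b g))
    rw [Rfun_apply, Rfun_apply, Rfun_apply, lam_F (a * b).2, lam_F a.2, lam_F b.2,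
      Subgroup.coe_mul]
    group

lemma lam_R (φ : Subgroup.normalizer ((MulAction.toPermHom G G).range : Set (Equiv.Perm G))) (g : G) :
    MulAction.toPermHom G G (R φ g) =
      (φ : Equiv.Perm G) * MulAction.toPermHom G G g * (φ : Equiv.Perm G)⁻¹ :=
  lam_F φ.2 g

lemma conj_lam (α : MulAut G) (g : G) :
    (α.toEquiv : Equiv.Perm G) * MulAction.toPermHom G G g * (α.toEquiv : Equiv.Perm G)⁻¹ =
      MulAction.toPermHom G G (α g) := by
  ext x
  simp [lam_apply, Equiv.Perm.mul_apply, map_mul, Equiv.Perm.inv_def]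

lemma mulAut_mem_normalizer (α : MulAut G) :
    (α.toEquiv : Equiv.Perm G) ∈ Subgroup.normalizer ((MulAction.toPermHom G G).range : Set (Equiv.Perm G)) := by
  rw [Subgroup.mem_normalizer_iff]
  intro h
  constructor
  · rintro ⟨g, rfl⟩
    exact ⟨α g, (conj_lam α g).symm⟩
  · rintro ⟨g, hg⟩
    refine ⟨α.symm g, ?_⟩
    have : (α.symm.toEquiv : Equiv.Perm G) = (α.toEquiv : Equiv.Perm G)⁻¹ := rfl
    rw [← conj_lam α.symm g, this, hg]
    group

lemma R_surj : Function.Surjective (R (G := G)) := by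
  intro α
  refine ⟨⟨α.toEquiv, mulAut_mem_normalizer α⟩, ?_⟩
  ext g
  apply lam_inj
  rw [lam_R]
  exact conj_lam α g

end Stmt0Aux

/-- For a group `G` with left regular representation
`lam : G →* Equiv.Perm G`, `L = lam.range` and `N` the normalizer of `L` in
`Equiv.Perm G`, there is a surjective homomorphism `R : N →* MulAut G` with
`lam (R φ g) = φ * lam g * φ⁻¹`, and `R (lam u) = MulAut.conj u` for `u ∈ G`. -/
theorem stmt0 (G : Type*) [Group G] :
    ∃ R : (Subgroup.normalizer ((MulAction.toPermHom G G).range : Set (Equiv.Perm G))) →* MulAut G,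
      Function.Surjective R ∧
      (∀ (φ : Subgroup.normalizer ((MulAction.toPermHom G G).range : Set (Equiv.Perm G))) (g : G),
        MulAction.toPermHom G G (R φ g) =
          (φ : Equiv.Perm G) * MulAction.toPermHom G G g * (φ : Equiv.Perm G)⁻¹) ∧
      (∀ (u : G) (hu : MulAction.toPermHom G G u ∈ Subgroup.normalizer ((MulAction.toPermHom G G).range : Set (Equiv.Perm G))),
        R ⟨MulAction.toPermHom G G u, hu⟩ = MulAut.conj u) := by
  refine ⟨Stmt0Aux.R, Stmt0Aux.R_surj, Stmt0Aux.lam_R, ?_⟩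
  intro u hu
  ext g
  apply Stmt0Aux.lam_inj
  rw [Stmt0Aux.lam_R, MulAut.conj_apply, map_mul, map_mul, map_inv]
end

section
/- Let G be a group acting faithfully on a set X, and suppose r : Fin n → X is a finite family such that every element of X lies in the G-orbit of r i for some i. For x ∈ X let k₂(x) denote the cardinality of the set of orbits of the diagonal action of G on X × X (g • (a,b) = (g • a, g • b)) that contain a pair whose first coordinate is x. Then the cardinality of the center of G is at most the product over i : Fin n of k₂(r i). -/
/-- If a group `G` acts faithfully on `X` and `r : Fin n → X`
meets every orbit, then the cardinality of the center of `G` is at most the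
product over `i` of the number of orbits of the diagonal action on `X × X`
containing a pair with first coordinate `r i`. -/
theorem stmt1 {G X : Type u} [Group G] [MulAction G X] [FaithfulSMul G X]
    (n : ℕ) (r : Fin n → X) (hr : ∀ x : X, ∃ i, x ∈ MulAction.orbit G (r i)) :
    Cardinal.mk (Subgroup.center G) ≤
      ∏ i : Fin n,
        Cardinal.mk {q : Quotient (MulAction.orbitRel G (X × X)) |
          ∃ b : X, Quotient.mk (MulAction.orbitRel G (X × X)) (r i, b) = q} := by
  have key : Cardinal.mk (Subgroup.center G) ≤
      Cardinal.mk (Π i : Fin n, {q : Quotient (MulAction.orbitRel G (X × X)) |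
          ∃ b : X, Quotient.mk (MulAction.orbitRel G (X × X)) (r i, b) = q}) := by
    apply Cardinal.mk_le_of_injective
      (f := fun (z : Subgroup.center G) (i : Fin n) =>
        ⟨Quotient.mk (MulAction.orbitRel G (X × X)) (r i, (z : G) • r i), ⟨_, rfl⟩⟩)
    intro z w h
    have hzw : ∀ x : X, (z : G) • x = (w : G) • x := by
      intro x
      obtain ⟨i, g, hg⟩ := hr x
      have h1 := congrFun h i
      have h2 : (MulAction.orbitRel G (X × X)).r (r i, (z : G) • r i)
          (r i, (w : G) • r i) := Quotient.eq'.mp (congrArg Subtype.val h1)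
      obtain ⟨k, hk⟩ := h2
      have hk1 : (k : G) • r i = r i := congrArg Prod.fst hk
      have hk2 : (k : G) • (w : G) • r i = (z : G) • r i := congrArg Prod.snd hk
      have hcomm := (Subgroup.mem_center_iff.mp w.2) k
      have hz : (z : G) • r i = (w : G) • r i := by
        rw [← hk2, ← mul_smul, hcomm, mul_smul, hk1]
      have hz' : ∀ c : G, c • r i = x → (z : G) • x = (w : G) • x := by
        intro c hc
        have cz := (Subgroup.mem_center_iff.mp z.2) c
        have cw := (Subgroup.mem_center_iff.mp w.2) c
        calc (z : G) • x = (z : G) • c • r i := by rw [hc]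
          _ = ((z : G) * c) • r i := (mul_smul _ _ _).symm
          _ = (c * (z : G)) • r i := by rw [cz]
          _ = c • (z : G) • r i := mul_smul _ _ _
          _ = c • (w : G) • r i := by rw [hz]
          _ = (c * (w : G)) • r i := (mul_smul _ _ _).symm
          _ = ((w : G) * c) • r i := by rw [cw]
          _ = (w : G) • c • r i := mul_smul _ _ _
          _ = (w : G) • x := by rw [hc]
      exact hz' g hg
    exact Subtype.ext (eq_of_smul_eq_smul hzw)
  have hp := Cardinal.prod_eq_of_fintype (fun i : Fin n =>
    Cardinal.mk {q : Quotient (MulAction.orbitRel G (X × X)) |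
      ∃ b : X, Quotient.mk (MulAction.orbitRel G (X × X)) (r i, b) = q})
  simp only [Cardinal.lift_id'] at hp
  rw [Cardinal.mk_pi] at key; exact key.trans_eq hp
end

section
/- Let G be a group acting faithfully on a set Y, and let C be the center of G. If g ∈ G is such that for every pair (w, w') ∈ Y × Y there exists c ∈ C with g • w = c • w and g • w' = c • w', then g ∈ C. Equivalently, the induced action of G/C on the quotient of Y × Y by the orbit equivalence relation of the diagonal action of C is faithful. -/
/-- If a group `G` acts faithfully on `Y` and `g ∈ G` is such
that for every pair `(w, w')` there is a central element `c` with
`g • w = c • w` and `g • w' = c • w'`, then `g` is central.  (This says that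
the induced action of `G / Z(G)` on the quotient of `Y × Y` by the orbit
equivalence relation of the diagonal action of the center is faithful.) -/
theorem stmt3 {G Y : Type*} [Group G] [MulAction G Y] [FaithfulSMul G Y]
    (g : G)
    (h : ∀ w w' : Y, ∃ c ∈ Subgroup.center G, g • w = c • w ∧ g • w' = c • w') :
    g ∈ Subgroup.center G := by
  rw [Subgroup.mem_center_iff]
  intro x
  apply FaithfulSMul.eq_of_smul_eq_smul (M := G) (α := Y)
  intro y
  obtain ⟨c, hc, h1, h2⟩ := h y (x • y)
  rw [Subgroup.mem_center_iff] at hc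
  calc (x * g) • y = x • g • y := mul_smul x g y
    _ = x • c • y := by rw [h1]
    _ = (x * c) • y := (mul_smul x c y).symm
    _ = (c * x) • y := by rw [hc x]
    _ = c • x • y := mul_smul c x y
    _ = g • x • y := h2.symm
    _ = (g * x) • y := (mul_smul g x y).symm
end

section
/- Let G be an oligomorphic subgroup of Equiv.Perm ℕ, let C be its center, and let ∼ denote the orbit equivalence relation on ℕ × ℕ of the diagonal action of C. Then G acts on the quotient set (ℕ × ℕ)/∼ by g • [p] = [g • p], the kernel of this action is exactly C, and for every n the induced diagonal action of G on n-tuples of elements of (ℕ × ℕ)/∼ has only finitely many orbits. -/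
/-- A subgroup of `Equiv.Perm ℕ` is oligomorphic if for every `n ≥ 1` the
diagonal action on `n`-tuples has only finitely many orbits. -/
def IsOligomorphic (G : Subgroup (Equiv.Perm ℕ)) : Prop :=
  ∀ n : ℕ, 1 ≤ n → Finite (Quotient (MulAction.orbitRel G (Fin n → ℕ)))

/-- Let `G` be oligomorphic, `C` its center, and `∼` the orbit
equivalence relation on `ℕ × ℕ` of the diagonal action of `C`.  Then `G`
acts on `(ℕ × ℕ)/∼` by `g • [p] = [g • p]`, the kernel of this action is
exactly `C`, and for each `n` the diagonal action of `G` on `n`-tuples of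
elements of `(ℕ × ℕ)/∼` has only finitely many orbits. -/
theorem stmt4 (G : Subgroup (Equiv.Perm ℕ)) (holig : IsOligomorphic G) :
    ∃ sm : G → Quotient (MulAction.orbitRel (Subgroup.center G) (ℕ × ℕ)) →
            Quotient (MulAction.orbitRel (Subgroup.center G) (ℕ × ℕ)),
      (∀ (g : G) (p : ℕ × ℕ),
          sm g (Quotient.mk (MulAction.orbitRel (Subgroup.center G) (ℕ × ℕ)) p) =
            Quotient.mk (MulAction.orbitRel (Subgroup.center G) (ℕ × ℕ)) (g • p)) ∧
      (∀ g h : G, ∀ q, sm (g * h) q = sm g (sm h q)) ∧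
      (∀ g : G, (∀ q, sm g q = q) ↔ g ∈ Subgroup.center G) ∧
      (∀ n : ℕ,
        {S : Set (Fin n → Quotient (MulAction.orbitRel (Subgroup.center G) (ℕ × ℕ))) |
          ∃ t : Fin n → Quotient (MulAction.orbitRel (Subgroup.center G) (ℕ × ℕ)),
            S = {s | ∃ g : G, (fun i => sm g (t i)) = s}}.Finite) := by
  classical
  have hcomm : ∀ (c : Subgroup.center G) (g : G) (p : ℕ × ℕ),
      g • ((c : G) • p) = (c : G) • (g • p) := by
    intro c g p
    rw [smul_smul, smul_smul, Subgroup.mem_center_iff.mp c.2 g]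
  let sm : G → Quotient (MulAction.orbitRel (Subgroup.center G) (ℕ × ℕ)) →
      Quotient (MulAction.orbitRel (Subgroup.center G) (ℕ × ℕ)) :=
    fun g => Quotient.map' (fun p => g • p) (by
      intro a b hab
      obtain ⟨c, hc⟩ := hab
      have hc' : (c : G) • b = a := hc
      refine ⟨c, ?_⟩
      show (c : G) • (g • b) = g • a
      rw [← hcomm, hc'])
  have hsm : ∀ (g : G) (p : ℕ × ℕ),
      sm g (Quotient.mk (MulAction.orbitRel (Subgroup.center G) (ℕ × ℕ)) p) =
        Quotient.mk (MulAction.orbitRel (Subgroup.center G) (ℕ × ℕ)) (g • p) := by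
    intro g p; rfl
  refine ⟨sm, hsm, ?_, ?_, ?_⟩
  · intro g h q
    induction q using Quotient.inductionOn with
    | h p => show Quotient.mk _ ((g * h) • p) = Quotient.mk _ (g • (h • p))
             rw [mul_smul]
  · intro g
    constructor
    · intro hg
      rw [Subgroup.mem_center_iff]
      intro h
      have key : ∀ w : ℕ, (g : Equiv.Perm ℕ) ((h : Equiv.Perm ℕ) w) =
          (h : Equiv.Perm ℕ) ((g : Equiv.Perm ℕ) w) := by
        intro w
        have k := hg (Quotient.mk _ ((w, (h : Equiv.Perm ℕ) w) : ℕ × ℕ))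
        rw [hsm, Quotient.eq] at k
        obtain ⟨c, hc⟩ := k
        have hc' : (c : G) • ((w, (h : Equiv.Perm ℕ) w) : ℕ × ℕ) =
            g • ((w, (h : Equiv.Perm ℕ) w) : ℕ × ℕ) := hc
        have h1 : ((c : G) : Equiv.Perm ℕ) w = (g : Equiv.Perm ℕ) w :=
          congrArg Prod.fst hc'
        have h2 : ((c : G) : Equiv.Perm ℕ) ((h : Equiv.Perm ℕ) w) =
            (g : Equiv.Perm ℕ) ((h : Equiv.Perm ℕ) w) := congrArg Prod.snd hc'
        have hch : (c : G) * h = h * (c : G) := (Subgroup.mem_center_iff.mp c.2 h).symm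
        have hch' : ((c : G) : Equiv.Perm ℕ) ((h : Equiv.Perm ℕ) w) =
            (h : Equiv.Perm ℕ) (((c : G) : Equiv.Perm ℕ) w) := by
          have e : (((c : G) * h : G) : Equiv.Perm ℕ) w =
              ((h * (c : G) : G) : Equiv.Perm ℕ) w := by rw [hch]
          simpa [Equiv.Perm.mul_apply] using e
        rw [← h2, hch', h1]
      apply Subtype.ext
      apply Equiv.ext
      intro w
      have : ((h * g : G) : Equiv.Perm ℕ) w = ((g * h : G) : Equiv.Perm ℕ) w := by
        simpa [Equiv.Perm.mul_apply] using (key w).symm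
      exact this
    · intro hg q
      induction q using Quotient.inductionOn with
      | h p =>
        rw [hsm, Quotient.eq]
        exact ⟨⟨g, hg⟩, rfl⟩
  · intro n
    haveI hfin : Finite (Quotient (MulAction.orbitRel G (Fin n → ℕ × ℕ))) := by
      haveI h1 := holig (2 * n + 1) (by omega)
      let F : (Fin (2 * n + 1) → ℕ) → (Fin n → ℕ × ℕ) :=
        fun u i => (u ⟨i, by omega⟩, u ⟨n + i, by omega⟩)
      have hFequiv : ∀ (g : G) u, F (g • u) = g • F u := fun g u => rfl
      have hFsurj : Function.Surjective F := by
        intro v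
        refine ⟨fun j => if h : (j : ℕ) < n then (v ⟨j, h⟩).1
          else if h2 : (j : ℕ) - n < n then (v ⟨(j : ℕ) - n, h2⟩).2 else 0, ?_⟩
        funext i
        have hi : (i : ℕ) < n := i.2
        have e1 : ¬ (n + (i : ℕ) < n) := by omega
        have e2 : n + (i : ℕ) - n < n := by omega
        simp only [F, dif_pos hi, dif_neg e1, dif_pos e2]
        have : n + (i : ℕ) - n = (i : ℕ) := by omega
        simp [this]
      let Fq : Quotient (MulAction.orbitRel G (Fin (2 * n + 1) → ℕ)) →
          Quotient (MulAction.orbitRel G (Fin n → ℕ × ℕ)) :=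
        Quotient.map' F (by
          intro a b hab
          obtain ⟨g, hg⟩ := hab
          have hg' : g • b = a := hg
          exact ⟨g, by rw [← hg', hFequiv]⟩)
      have hFqsurj : Function.Surjective Fq := by
        intro q
        induction q using Quotient.inductionOn with
        | h v =>
          obtain ⟨u, hu⟩ := hFsurj v
          exact ⟨Quotient.mk _ u, by
            show Quotient.mk _ (F u) = Quotient.mk _ v
            rw [hu]⟩
      exact Finite.of_surjective Fq hFqsurj
    let Φ : Quotient (MulAction.orbitRel G (Fin n → ℕ × ℕ)) →
        Set (Fin n → Quotient (MulAction.orbitRel (Subgroup.center G) (ℕ × ℕ))) :=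
      Quotient.lift (fun u => {s | ∃ g : G,
          (fun i => sm g (Quotient.mk (MulAction.orbitRel (Subgroup.center G) (ℕ × ℕ)) (u i))) = s})
        (by
          intro u' u hab
          obtain ⟨g0, hg0⟩ := hab
          have hg0' : g0 • u = u' := hg0
          ext s
          simp only [Set.mem_setOf_eq]
          constructor
          · rintro ⟨g, rfl⟩
            refine ⟨g * g0, ?_⟩
            funext i
            have hui : u' i = g0 • u i := by rw [← hg0']; rfl
            rw [hui, hsm, hsm, ← mul_smul]
          · rintro ⟨g, rfl⟩
            refine ⟨g * g0⁻¹, ?_⟩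
            funext i
            have hui : u' i = g0 • u i := by rw [← hg0']; rfl
            rw [hui, hsm, hsm, ← mul_smul, inv_mul_cancel_right])
    apply Set.Finite.subset (Set.finite_range Φ)
    rintro S ⟨t, rfl⟩
    refine ⟨Quotient.mk _ (fun i => (t i).out), ?_⟩
    show {s | ∃ g : G,
        (fun i => sm g (Quotient.mk (MulAction.orbitRel (Subgroup.center G) (ℕ × ℕ)) ((t i).out))) = s}
      = _
    have hout : ∀ i, Quotient.mk (MulAction.orbitRel (Subgroup.center G) (ℕ × ℕ)) (t i).out = t i :=
      fun i => Quotient.out_eq _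
    simp only [hout]
end

section
/- Let G be an oligomorphic subgroup of Equiv.Perm ℕ. Then the center of G is finite. -/
/-- The center of an oligomorphic subgroup of `Equiv.Perm ℕ`
is finite. -/
theorem stmt5 (G : Subgroup (Equiv.Perm ℕ)) (holig : IsOligomorphic G) :
    Finite (Subgroup.center G) := by
  have h2 : Finite (Quotient (MulAction.orbitRel G (Fin 2 → ℕ))) := holig 2 one_le_two
  apply Finite.of_injective
    (fun z : Subgroup.center G =>
      {q : Quotient (MulAction.orbitRel G (Fin 2 → ℕ)) |
        ∃ x : ℕ, q = Quotient.mk _ ![x, ((z : G) : Equiv.Perm ℕ) x]})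
  intro z w h
  have key : ∀ x : ℕ, ((z : G) : Equiv.Perm ℕ) x = ((w : G) : Equiv.Perm ℕ) x := by
    intro x
    have hx : (Quotient.mk _ ![x, ((z : G) : Equiv.Perm ℕ) x] :
        Quotient (MulAction.orbitRel G (Fin 2 → ℕ))) ∈
        {q : Quotient (MulAction.orbitRel G (Fin 2 → ℕ)) |
          ∃ y : ℕ, q = Quotient.mk _ ![y, ((w : G) : Equiv.Perm ℕ) y]} := by
      have h' : {q : Quotient (MulAction.orbitRel G (Fin 2 → ℕ)) |
          ∃ x : ℕ, q = Quotient.mk _ ![x, ((z : G) : Equiv.Perm ℕ) x]} =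
          {q : Quotient (MulAction.orbitRel G (Fin 2 → ℕ)) |
          ∃ x : ℕ, q = Quotient.mk _ ![x, ((w : G) : Equiv.Perm ℕ) x]} := h
      rw [← h']; exact ⟨x, rfl⟩
    obtain ⟨y, hy⟩ := hx
    rw [Quotient.eq] at hy
    obtain ⟨g, hg⟩ := hy
    have h0 := congrFun hg 0
    have h1 := congrFun hg 1
    simp only [Matrix.cons_val_zero, Matrix.cons_val_one, Matrix.head_cons] at h0 h1
    -- h0 : g • y = x, h1 : g • (w y) = z x  (pointwise smul)
    have hcomm := w.2
    rw [Subgroup.mem_center_iff] at hcomm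
    have := hcomm g
    have hwg : ∀ a : ℕ, ((w : G) : Equiv.Perm ℕ) ((g : Equiv.Perm ℕ) a) =
        (g : Equiv.Perm ℕ) (((w : G) : Equiv.Perm ℕ) a) := by
      intro a
      have : ((g * (w : G) : G) : Equiv.Perm ℕ) a = (((w : G) * g : G) : Equiv.Perm ℕ) a := by
        rw [this]
      simpa [Equiv.Perm.mul_apply] using this.symm
    have hsx : (g : Equiv.Perm ℕ) y = x := h0
    have hs1 : (g : Equiv.Perm ℕ) (((w : G) : Equiv.Perm ℕ) y) = ((z : G) : Equiv.Perm ℕ) x := h1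
    rw [← hsx, hwg y, hs1, hsx]
  have : ((z : G) : Equiv.Perm ℕ) = ((w : G) : Equiv.Perm ℕ) := Equiv.ext key
  exact Subtype.ext (Subtype.ext this)
end

section
/- Let G be a closed oligomorphic subgroup of Equiv.Perm ℕ. Then the upper central series of G stabilizes at a finite stage: there exists n such that the (n+1)-st term of the upper central series of G equals the n-th term. -/
/-- A subgroup of `Equiv.Perm ℕ` is closed (for pointwise convergence) if
every permutation approximated on arbitrarily long initial segments by
elements of `G` belongs to `G`. -/
def IsClosedSubgroup (G : Subgroup (Equiv.Perm ℕ)) : Prop :=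
  ∀ σ : Equiv.Perm ℕ, (∀ n : ℕ, ∃ g ∈ G, ∀ i < n, σ i = g i) → σ ∈ G

namespace Stmt7Aux

open MulAction

variable (G : Subgroup (Equiv.Perm ℕ))

/-- the pair `(α, β)` as a function `Fin 2 → ℕ`. -/
def pr (α β : ℕ) : Fin 2 → ℕ := ![α, β]

lemma pr_zero (α β : ℕ) : pr α β 0 = α := rfl

lemma pr_one (α β : ℕ) : pr α β 1 = β := rfl

lemma smul_pr {Γ : Type*} [Group Γ] [MulAction Γ ℕ] (g : Γ) (α β : ℕ) :
    g • pr α β = pr (g • α) (g • β) := by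
  funext i
  fin_cases i <;> rfl

/-- The set of images of `β` under elements of `G` fixing `α`. -/
def fib (α β : ℕ) : Set ℕ := {γ | ∃ g : ↥G, g • α = α ∧ g • β = γ}

/-- The "algebraic closure" of the point `α`. -/
def alg (α : ℕ) : Set ℕ := {β | (fib G α β).Finite}

lemma self_mem_alg (α : ℕ) : α ∈ alg G α := by
  have : fib G α α ⊆ {α} := by
    rintro γ ⟨g, hg1, hg2⟩
    simp only [Set.mem_singleton_iff]
    rw [← hg2, hg1]
  exact Set.Finite.subset (Set.finite_singleton α) this

lemma alg_finite (holig : IsOligomorphic G) (α : ℕ) : (alg G α).Finite := by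
  classical
  haveI : Finite (Quotient (orbitRel ↥G (Fin 2 → ℕ))) := holig 2 (by norm_num)
  set s2 := orbitRel ↥G (Fin 2 → ℕ) with hs2
  have hsub : alg G α ⊆
      ⋃ c ∈ (Set.univ : Set (Quotient s2)),
        {β | β ∈ alg G α ∧ (Quotient.mk'' (pr α β) : Quotient s2) = c} := by
    intro β hβ
    exact Set.mem_biUnion (Set.mem_univ _) ⟨hβ, rfl⟩
  refine Set.Finite.subset (Set.Finite.biUnion Set.finite_univ ?_) hsub
  intro c _
  by_cases hne : {β | β ∈ alg G α ∧ (Quotient.mk'' (pr α β) : Quotient s2) = c}.Nonempty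
  · obtain ⟨β₀, hβ₀, hc₀⟩ := hne
    refine Set.Finite.subset hβ₀ ?_
    rintro β ⟨hβ, hc⟩
    have : (Quotient.mk'' (pr α β) : Quotient s2) = Quotient.mk'' (pr α β₀) := by
      rw [hc, hc₀]
    have hrel : s2 (pr α β) (pr α β₀) := Quotient.eq''.mp this
    have : pr α β ∈ orbit ↥G (pr α β₀) := (orbitRel_apply).mp hrel
    obtain ⟨g, hg0⟩ := this
    have hg : pr (g • α) (g • β₀) = pr α β := by rw [← smul_pr]; exact hg0
    have h0 : g • α = α := by
      have := congrFun hg 0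
      simpa [pr] using this
    have h1 : g • β₀ = β := by
      have := congrFun hg 1
      simpa [pr] using this
    exact ⟨g, h0, h1⟩
  · rw [Set.not_nonempty_iff_eq_empty] at hne
    rw [hne]
    exact Set.finite_empty

/-- Elements of the upper central series move points only inside their algebraic closure. -/
lemma ucs_smul_mem_alg (holig : IsOligomorphic G) :
    ∀ n : ℕ, ∀ z : ↥G, z ∈ upperCentralSeries ↥G n → ∀ α : ℕ, z • α ∈ alg G α := by
  intro n
  induction n with
  | zero =>
      intro z hz α
      rw [show upperCentralSeries ↥G 0 = ⊥ from rfl, Subgroup.mem_bot] at hz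
      rw [hz, one_smul]
      exact self_mem_alg G α
  | succ n ih =>
      intro z hz α
      -- fib G α (z • α) ⊆ z • (alg G α)
      have hsub : fib G α (z • α) ⊆ (fun β => z • β) '' (alg G α) := by
        rintro γ ⟨g, hgα, hgz⟩
        have hw : z⁻¹ * g * z * g⁻¹ ∈ upperCentralSeries ↥G n := by
          have := mem_upperCentralSeries_succ_iff.mp (inv_mem hz) g
          rwa [commutatorElement_def, inv_inv] at this
        set w := z⁻¹ * g * z * g⁻¹ with hwdef
        have hkey : g * z = z * w * g := by
          rw [hwdef]; group
        have : γ = z • (w • α) := by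
          rw [← hgz, ← mul_smul, hkey]
          rw [mul_smul, mul_smul, hgα]
        rw [this]
        exact Set.mem_image_of_mem _ (ih w hw α)
      have hfin : (fib G α (z • α)).Finite :=
        Set.Finite.subset (Set.Finite.image _ (alg_finite G holig α)) hsub
      exact hfin

/-- pointwise stabilizer of a set of points -/
def pstab (F : Set ℕ) : Subgroup ↥G := ⨅ x ∈ F, stabilizer ↥G x

lemma mem_pstab {F : Set ℕ} {g : ↥G} : g ∈ pstab G F ↔ ∀ x ∈ F, g • x = x := by
  simp [pstab, Subgroup.mem_iInf, mem_stabilizer_iff]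

/-- Orbit quotients of the pointwise stabilizer of a finite set are finite. -/
lemma pstab_quot_finite (holig : IsOligomorphic G) (F : Set ℕ) (hF : F.Finite)
    (k : ℕ) (hk : 1 ≤ k) :
    Finite (Quotient (orbitRel ↥(pstab G F) (Fin k → ℕ))) := by
  classical
  haveI : Fintype ↥F := hF.fintype
  set f := Fintype.card ↥F with hf
  let e : Fin f → ℕ := fun i => ((Fintype.equivFin ↥F).symm i : ℕ)
  have he : ∀ i, e i ∈ F := fun i => ((Fintype.equivFin ↥F).symm i).2
  have hsurj : ∀ x ∈ F, ∃ i, e i = x := by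
    intro x hx
    refine ⟨Fintype.equivFin ↥F ⟨x, hx⟩, ?_⟩
    simp [e]
  haveI : Finite (Quotient (orbitRel ↥G (Fin (f + k) → ℕ))) := holig (f + k) (by omega)
  set s1 := orbitRel ↥(pstab G F) (Fin k → ℕ) with hs1
  set s2 := orbitRel ↥G (Fin (f + k) → ℕ) with hs2
  have wd : ∀ t t' : Fin k → ℕ, s1 t t' → s2 (Fin.append e t) (Fin.append e t') := by
    intro t t' hrel
    obtain ⟨h, hh0⟩ := (orbitRel_apply).mp hrel
    have hh : h • t' = t := hh0
    refine (orbitRel_apply).mpr ⟨(h : ↥G), ?_⟩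
    funext i
    refine Fin.addCases (fun j => ?_) (fun j => ?_) i
    · have : (h : ↥G) • e j = e j := (mem_pstab G).mp h.2 (e j) (he j)
      calc ((h : ↥G) • Fin.append e t') (Fin.castAdd k j)
          = (h : ↥G) • (Fin.append e t' (Fin.castAdd k j)) := rfl
        _ = (h : ↥G) • e j := by rw [Fin.append_left]
        _ = e j := this
        _ = Fin.append e t (Fin.castAdd k j) := by rw [Fin.append_left]
    · calc ((h : ↥G) • Fin.append e t') (Fin.natAdd f j)
          = (h : ↥G) • (Fin.append e t' (Fin.natAdd f j)) := rfl
        _ = (h : ↥G) • t' j := by rw [Fin.append_right]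
        _ = (h • t') j := rfl
        _ = t j := by rw [hh]
        _ = Fin.append e t (Fin.natAdd f j) := by rw [Fin.append_right]
  let Θ : Quotient s1 → Quotient s2 :=
    Quotient.map' (fun t => Fin.append e t) wd
  have hinj : Function.Injective Θ := by
    intro q q'
    induction q using Quotient.ind' with
    | _ t =>
    induction q' using Quotient.ind' with
    | _ t' =>
    intro h
    have : (Quotient.mk'' (Fin.append e t) : Quotient s2) = Quotient.mk'' (Fin.append e t') := by
      simpa [Θ, Quotient.map'_mk''] using h
    have hrel : s2 (Fin.append e t) (Fin.append e t') := Quotient.eq''.mp this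
    obtain ⟨g, hg⟩ := (orbitRel_apply).mp hrel
    have hgF : g ∈ pstab G F := by
      rw [mem_pstab]
      intro x hx
      obtain ⟨j, rfl⟩ := hsurj x hx
      have := congrFun hg (Fin.castAdd k j)
      calc g • e j = (g • Fin.append e t') (Fin.castAdd k j) := by
            rw [show (g • Fin.append e t') (Fin.castAdd k j)
                = g • (Fin.append e t' (Fin.castAdd k j)) from rfl, Fin.append_left]
        _ = Fin.append e t (Fin.castAdd k j) := this
        _ = e j := by rw [Fin.append_left]
    have hgt : (⟨g, hgF⟩ : ↥(pstab G F)) • t' = t := by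
      funext j
      have := congrFun hg (Fin.natAdd f j)
      calc ((⟨g, hgF⟩ : ↥(pstab G F)) • t') j = g • t' j := rfl
        _ = (g • Fin.append e t') (Fin.natAdd f j) := by
            rw [show (g • Fin.append e t') (Fin.natAdd f j)
                = g • (Fin.append e t' (Fin.natAdd f j)) from rfl, Fin.append_right]
        _ = Fin.append e t (Fin.natAdd f j) := this
        _ = t j := by rw [Fin.append_right]
    exact Quotient.sound' ((orbitRel_apply).mpr ⟨⟨g, hgF⟩, hgt⟩)
  exact Finite.of_injective Θ hinj

/-- a point moved by a nontrivial element -/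
lemma exists_moved {w : ↥G} (hw : w ≠ 1) : ∃ α : ℕ, w • α ≠ α := by
  by_contra h
  push_neg at h
  apply hw
  have : (w : Equiv.Perm ℕ) = 1 := by
    ext α
    exact h α
  exact Subtype.ext this

/-- Every term of the upper central series of `G` is finite. -/
lemma ucs_finite (holig : IsOligomorphic G) :
    ∀ n : ℕ, ((upperCentralSeries ↥G n : Subgroup ↥G) : Set ↥G).Finite := by
  intro n
  induction n with
  | zero =>
      rw [show upperCentralSeries ↥G 0 = ⊥ from rfl]
      simp
  | succ n ih =>
      classical
      -- choose a separating window for Z n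
      let pt : ↥G → ℕ := fun w =>
        if h : w = 1 then 0 else Classical.choose (exists_moved G h)
      have hpt : ∀ w : ↥G, w ≠ 1 → w • pt w ≠ pt w := by
        intro w hw
        simp only [pt, dif_neg hw]
        exact Classical.choose_spec (exists_moved G hw)
      set W : Set ℕ :=
        pt '' (((upperCentralSeries ↥G n : Subgroup ↥G) : Set ↥G) \ {1}) with hW
      have hWfin : W.Finite := Set.Finite.image _ (ih.diff)
      set Fs : Set ℕ := W ∪ ⋃ x ∈ W, alg G x with hFs
      have hFsfin : Fs.Finite :=
        Set.Finite.union hWfin (Set.Finite.biUnion hWfin fun x _ => alg_finite G holig x)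
      set H := pstab G Fs with hH
      -- all elements of Z (n+1) commute with H
      have hcomm : ∀ z : ↥G, z ∈ upperCentralSeries ↥G (n + 1) →
          ∀ g : ↥G, g ∈ H → z * g = g * z := by
        intro z hz g hg
        have hc : z * g * z⁻¹ * g⁻¹ ∈ upperCentralSeries ↥G n :=
          mem_upperCentralSeries_succ_iff.mp hz g
        have hfix : ∀ x ∈ W, (z * g * z⁻¹ * g⁻¹) • x = x := by
          intro x hxW
          have hxF : x ∈ Fs := Or.inl hxW
          have hgx : g • x = x := (mem_pstab G).mp hg x hxF
          have hginvx : g⁻¹ • x = x := by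
            rw [inv_smul_eq_iff]; exact hgx.symm
          have hzx : z⁻¹ • x ∈ alg G x :=
            ucs_smul_mem_alg G holig (n + 1) z⁻¹ (inv_mem hz) x
          have hzxF : z⁻¹ • x ∈ Fs := Or.inr (Set.mem_biUnion hxW hzx)
          have hgzx : g • (z⁻¹ • x) = z⁻¹ • x := (mem_pstab G).mp hg _ hzxF
          calc (z * g * z⁻¹ * g⁻¹) • x = z • (g • (z⁻¹ • (g⁻¹ • x))) := by
                simp [mul_smul]
            _ = z • (g • (z⁻¹ • x)) := by rw [hginvx]
            _ = z • (z⁻¹ • x) := by rw [hgzx]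
            _ = x := smul_inv_smul z x
        have hc1 : z * g * z⁻¹ * g⁻¹ = 1 := by
          by_contra hne
          have hmem : (z * g * z⁻¹ * g⁻¹) ∈
              (((upperCentralSeries ↥G n : Subgroup ↥G) : Set ↥G) \ {1}) := ⟨hc, hne⟩
          have hptW : pt (z * g * z⁻¹ * g⁻¹) ∈ W := Set.mem_image_of_mem _ hmem
          exact hpt _ hne (hfix _ hptW)
        have : z * g = (z * g * z⁻¹ * g⁻¹) * (g * z) := by group
        rw [hc1, one_mul] at this
        exact this
      -- finite orbit quotients of H
      haveI hQ1 : Finite (Quotient (orbitRel ↥H (Fin 1 → ℕ))) :=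
        pstab_quot_finite G holig Fs hFsfin 1 (by norm_num)
      haveI hQ2 : Finite (Quotient (orbitRel ↥H (Fin 2 → ℕ))) :=
        pstab_quot_finite G holig Fs hFsfin 2 (by norm_num)
      set s1 := orbitRel ↥H (Fin 1 → ℕ) with hs1
      set s2 := orbitRel ↥H (Fin 2 → ℕ) with hs2
      -- injection of Z (n+1) into functions between finite quotients
      have key : Finite ↥((upperCentralSeries ↥G (n + 1) : Subgroup ↥G) : Set ↥G) := by
        have wd : ∀ z : ↥G, z ∈ upperCentralSeries ↥G (n + 1) →
            ∀ t t' : Fin 1 → ℕ, s1 t t' →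
              s2 (pr (t 0) (z • t 0)) (pr (t' 0) (z • t' 0)) := by
          intro z hz t t' hrel
          obtain ⟨h, hh⟩ := (orbitRel_apply).mp hrel
          refine (orbitRel_apply).mpr ⟨h, ?_⟩
          have ht0 : (h : ↥H) • t' 0 = t 0 := by
            have := congrFun hh 0
            exact this
          have hcz : (h : ↥G) • (z • t' 0) = z • ((h : ↥G) • t' 0) := by
            rw [← mul_smul, ← mul_smul, hcomm z hz (h : ↥G) h.2]
          calc (h : ↥H) • pr (t' 0) (z • t' 0)
              = pr ((h : ↥G) • t' 0) ((h : ↥G) • (z • t' 0)) :=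
                smul_pr (h : ↥H) (t' 0) (z • t' 0)
            _ = pr (t 0) (z • t 0) := by
                rw [hcz, show ((h:↥H) : ↥G) • t' 0 = (h : ↥H) • t' 0 from rfl, ht0]
        let Φ : ↥((upperCentralSeries ↥G (n + 1) : Subgroup ↥G) : Set ↥G) →
            (Quotient s1 → Quotient s2) :=
          fun z q => Quotient.map' (fun t : Fin 1 → ℕ => pr (t 0) (z.1 • t 0))
            (wd z.1 z.2) q
        have hinj : Function.Injective Φ := by
          intro z z' hΦ
          have hval : ∀ α : ℕ, z.1 • α = z'.1 • α := by
            intro α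
            have := congrFun hΦ (Quotient.mk'' (fun _ : Fin 1 => α))
            have heq : (Quotient.mk'' (pr α (z.1 • α)) : Quotient s2)
                = Quotient.mk'' (pr α (z'.1 • α)) := by
              simpa [Φ, Quotient.map'_mk''] using this
            have hrel : s2 (pr α (z.1 • α)) (pr α (z'.1 • α)) := Quotient.eq''.mp heq
            obtain ⟨h, hh0⟩ := (orbitRel_apply).mp hrel
            have hh : pr ((h : ↥H) • α) ((h : ↥H) • (z'.1 • α)) = pr α (z.1 • α) := by
              rw [← smul_pr]; exact hh0
            have h0 : (h : ↥G) • α = α := by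
              have := congrFun hh 0
              exact this
            have h1 : (h : ↥G) • (z'.1 • α) = z.1 • α := by
              have := congrFun hh 1
              exact this
            have : z.1 • α = z'.1 • ((h : ↥G) • α) := by
              rw [← h1, ← mul_smul, ← mul_smul, hcomm z'.1 z'.2 (h : ↥G) h.2]
            rw [this, h0]
          apply Subtype.ext
          apply Subtype.ext
          apply Equiv.ext
          intro α
          exact hval α
        exact Finite.of_injective Φ hinj
      exact Set.finite_coe_iff.mp key

end Stmt7Aux

open Stmt7Aux MulAction in
/-- For a closed oligomorphic subgroup `G` of `Equiv.Perm ℕ`,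
the upper central series stabilizes at a finite stage. -/
theorem stmt7 (G : Subgroup (Equiv.Perm ℕ)) (hcl : IsClosedSubgroup G)
    (holig : IsOligomorphic G) :
    ∃ n : ℕ, upperCentralSeries G (n + 1) = upperCentralSeries G n := by
  classical
  haveI hQ2fin : Finite (Quotient (orbitRel ↥G (Fin 2 → ℕ))) := holig 2 (by norm_num)
  set s2 := orbitRel ↥G (Fin 2 → ℕ) with hs2
  -- stabilizer sets
  set sZ : ℕ → ℕ → Set ↥G :=
    fun n α => {z | z ∈ upperCentralSeries ↥G n ∧ z • α = α} with hsZ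
  -- conjugation action on stabilizer sets
  have hconj : ∀ (n : ℕ) (g : ↥G) (α : ℕ),
      sZ n (g • α) = (fun z => g * z * g⁻¹) '' sZ n α := by
    intro n g α
    ext z
    constructor
    · rintro ⟨hz, hfix⟩
      refine ⟨g⁻¹ * z * g, ⟨?_, ?_⟩, by group⟩
      · have := Subgroup.Normal.conj_mem (inferInstance : (Subgroup.upperCentralSeries ↥G n).Normal) z hz g⁻¹
        exact (by simpa using this : g⁻¹ * z * g ∈ Subgroup.upperCentralSeries ↥G n)
      · have : (g⁻¹ * z * g) • α = g⁻¹ • (z • (g • α)) := by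
          simp [mul_smul]
        rw [this, hfix, inv_smul_smul]
    · rintro ⟨w, ⟨hw, hfix⟩, rfl⟩
      constructor
      · exact Subgroup.Normal.conj_mem (inferInstance : (Subgroup.upperCentralSeries ↥G n).Normal) w hw g
      · have : (g * w * g⁻¹) • (g • α) = g • (w • α) := by
          simp [mul_smul]
        rw [this, hfix]
  -- the stabilizer-equality predicate on pair classes
  have wdP : ∀ n : ℕ, ∀ p p' : Fin 2 → ℕ, s2 p p' →
      ((sZ n (p 0) = sZ n (p 1)) = (sZ n (p' 0) = sZ n (p' 1))) := by
    intro n p p' hrel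
    obtain ⟨g, hg⟩ := (orbitRel_apply).mp hrel
    have h0 : p 0 = g • p' 0 := by rw [← hg]; rfl
    have h1 : p 1 = g • p' 1 := by rw [← hg]; rfl
    have hinjc : Function.Injective (fun z : ↥G => g * z * g⁻¹) := by
      intro a b hab
      simpa using hab
    apply propext
    rw [h0, h1, hconj n g (p' 0), hconj n g (p' 1)]
    exact ⟨fun h => Set.image_injective.mpr hinjc h, fun h => by rw [h]⟩
  set P : ℕ → Quotient s2 → Prop :=
    fun n c => Quotient.liftOn' c (fun p => sZ n (p 0) = sZ n (p 1)) (wdP n) with hP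
  set S : ℕ → Set (Quotient s2) := fun n => {c | P n c} with hS
  -- the chain S is decreasing
  have hmono : ∀ n : ℕ, upperCentralSeries ↥G n ≤ upperCentralSeries ↥G (n + 1) :=
    fun n => upperCentralSeries_mono ↥G (Nat.le_succ n)
  have hdecr : ∀ n : ℕ, S (n + 1) ⊆ S n := by
    intro n c
    induction c using Quotient.ind' with
    | _ p =>
    intro hc
    have hc' : sZ (n + 1) (p 0) = sZ (n + 1) (p 1) := hc
    show sZ n (p 0) = sZ n (p 1)
    ext z
    constructor
    · rintro ⟨hz, hfix⟩
      have : z ∈ sZ (n + 1) (p 1) := by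
        rw [← hc']; exact ⟨hmono n hz, hfix⟩
      exact ⟨hz, this.2⟩
    · rintro ⟨hz, hfix⟩
      have : z ∈ sZ (n + 1) (p 0) := by
        rw [hc']; exact ⟨hmono n hz, hfix⟩
      exact ⟨hz, this.2⟩
  have hdecr' : ∀ m n : ℕ, m ≤ n → S n ⊆ S m := by
    intro m n hmn
    induction n with
    | zero =>
        have : m = 0 := Nat.le_zero.mp hmn
        rw [this]
    | succ n ih =>
        rcases Nat.lt_or_ge m (n + 1) with h | h
        · exact le_trans (hdecr n) (ih (Nat.lt_succ_iff.mp h))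
        · have : m = n + 1 := le_antisymm hmn h
          rw [this]
  -- all S n are finite subsets of a finite type; minimize cardinality
  have hSfin : ∀ n : ℕ, (S n).Finite := fun n => Set.toFinite _
  set a : ℕ → ℕ := fun n => (S n).ncard with ha
  have hrange : (Set.range a).Nonempty := ⟨a 0, 0, rfl⟩
  obtain ⟨n₀, hn₀⟩ : ∃ n₀, a n₀ = sInf (Set.range a) := Nat.sInf_mem hrange
  have hSstab : ∀ n : ℕ, n₀ ≤ n → S n = S n₀ := by
    intro n hn
    refine Set.eq_of_subset_of_ncard_le (hdecr' n₀ n hn) ?_ (hSfin n₀)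
    rw [← ha] at *
    have h1 : sInf (Set.range a) ≤ a n := Nat.sInf_le ⟨n, rfl⟩
    calc a n₀ = sInf (Set.range a) := hn₀
      _ ≤ a n := h1
  -- transfer stabilizer equality across levels
  have hPstab : ∀ n : ℕ, n₀ ≤ n → ∀ α β : ℕ, sZ n₀ α = sZ n₀ β → sZ n α = sZ n β := by
    intro n hn α β h
    have hc : P n₀ (Quotient.mk'' (pr α β)) := by
      show sZ n₀ (pr α β 0) = sZ n₀ (pr α β 1)
      rw [pr_zero, pr_one]
      exact h
    have hc' : (Quotient.mk'' (pr α β) : Quotient s2) ∈ S n := by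
      rw [hSstab n hn]
      exact hc
    have : sZ n (pr α β 0) = sZ n (pr α β 1) := hc'
    rw [pr_zero, pr_one] at this
    exact this
  -- the finite target type
  have hfin0 : ((upperCentralSeries ↥G n₀ : Subgroup ↥G) : Set ↥G).Finite :=
    ucs_finite G holig n₀
  set V : Set (Set ↥G) := Set.range (fun α => sZ n₀ α) with hV
  have hVfin : V.Finite := by
    refine Set.Finite.subset (Set.Finite.finite_subsets hfin0) ?_
    rintro T ⟨α, rfl⟩
    intro z hz
    exact hz.1
  haveI : Finite ↥V := hVfin.to_subtype
  set rep : ↥V → ℕ := fun T => Classical.choose T.2 with hrep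
  have hrepspec : ∀ T : ↥V, sZ n₀ (rep T) = T.1 := fun T => Classical.choose_spec T.2
  haveI hTfin : ∀ T : ↥V, Finite ↥(alg G (rep T)) :=
    fun T => (alg_finite G holig (rep T)).to_subtype
  haveI hPi : Finite (∀ T : ↥V, ↥(alg G (rep T))) := Pi.finite
  set R : ℕ := Nat.card (∀ T : ↥V, ↥(alg G (rep T))) with hR
  -- uniform cardinality bound for n ≥ n₀
  have hbound : ∀ n : ℕ, n₀ ≤ n →
      ((upperCentralSeries ↥G n : Subgroup ↥G) : Set ↥G).ncard ≤ R := by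
    intro n hn
    set ι : ↥((upperCentralSeries ↥G n : Subgroup ↥G) : Set ↥G) →
        (∀ T : ↥V, ↥(alg G (rep T))) :=
      fun z T => ⟨z.1 • rep T, ucs_smul_mem_alg G holig n z.1 z.2 (rep T)⟩ with hι
    have hinj : Function.Injective ι := by
      intro z z' hzz
      have hfixrep : ∀ T : ↥V, (z.1⁻¹ * z'.1) • rep T = rep T := by
        intro T
        have := congrFun hzz T
        have hval : z.1 • rep T = z'.1 • rep T := congrArg Subtype.val this
        rw [mul_smul, ← hval, inv_smul_smul]
      have hw : z.1⁻¹ * z'.1 ∈ upperCentralSeries ↥G n :=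
        mul_mem (inv_mem z.2) z'.2
      have hfixall : ∀ α : ℕ, (z.1⁻¹ * z'.1) • α = α := by
        intro α
        set T : ↥V := ⟨sZ n₀ α, Set.mem_range_self α⟩ with hT
        have h1 : sZ n₀ (rep T) = sZ n₀ α := hrepspec T
        have h2 : sZ n (rep T) = sZ n α := hPstab n hn (rep T) α h1
        have h3 : (z.1⁻¹ * z'.1) ∈ sZ n (rep T) := ⟨hw, hfixrep T⟩
        have h4 : (z.1⁻¹ * z'.1) ∈ sZ n α := by rw [← h2]; exact h3
        exact h4.2
      have hone : z.1⁻¹ * z'.1 = 1 := by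
        have : ((z.1⁻¹ * z'.1 : ↥G) : Equiv.Perm ℕ) = 1 := by
          ext α
          exact hfixall α
        exact Subtype.ext this
      have hv : z'.1 = z.1 := by
        have h5 := congrArg (fun u => z.1 * u) hone
        simpa [mul_assoc] using h5
      exact Subtype.ext hv.symm
    calc ((upperCentralSeries ↥G n : Subgroup ↥G) : Set ↥G).ncard
        = Nat.card ↥((upperCentralSeries ↥G n : Subgroup ↥G) : Set ↥G) :=
          (Nat.card_coe_set_eq _).symm
      _ ≤ R := Nat.card_le_card_of_injective ι hinj
  -- conclude by pigeonhole
  by_contra hcon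
  push_neg at hcon
  have hstep : ∀ k : ℕ,
      ((upperCentralSeries ↥G (n₀ + k) : Subgroup ↥G) : Set ↥G).ncard
      < ((upperCentralSeries ↥G (n₀ + k + 1) : Subgroup ↥G) : Set ↥G).ncard := by
    intro k
    have hsub : ((upperCentralSeries ↥G (n₀ + k) : Subgroup ↥G) : Set ↥G) ⊆
        ((upperCentralSeries ↥G (n₀ + k + 1) : Subgroup ↥G) : Set ↥G) :=
      hmono (n₀ + k)
    have hne : ((upperCentralSeries ↥G (n₀ + k) : Subgroup ↥G) : Set ↥G) ≠
        ((upperCentralSeries ↥G (n₀ + k + 1) : Subgroup ↥G) : Set ↥G) := by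
      intro h
      exact hcon (n₀ + k) (SetLike.coe_injective h.symm)
    have hss : ((upperCentralSeries ↥G (n₀ + k) : Subgroup ↥G) : Set ↥G) ⊂
        ((upperCentralSeries ↥G (n₀ + k + 1) : Subgroup ↥G) : Set ↥G) :=
      ⟨hsub, fun h => hne (Set.Subset.antisymm hsub h)⟩
    exact Set.ncard_lt_ncard hss (ucs_finite G holig (n₀ + k + 1))
  have hstrict : StrictMono (fun k : ℕ =>
      ((upperCentralSeries ↥G (n₀ + k) : Subgroup ↥G) : Set ↥G).ncard) :=
    strictMono_nat_of_lt_succ (fun k => hstep k)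
  have h1 : R + 1 ≤ ((upperCentralSeries ↥G (n₀ + (R + 1)) : Subgroup ↥G) : Set ↥G).ncard :=
    hstrict.le_apply
  have h2 : ((upperCentralSeries ↥G (n₀ + (R + 1)) : Subgroup ↥G) : Set ↥G).ncard ≤ R :=
    hbound (n₀ + (R + 1)) (Nat.le_add_right _ _)
  omega
end

section
/- Let G be a closed subgroup of Equiv.Perm ℕ and let α ∈ Equiv.Perm ℕ. Then α lies in the normalizer of G in Equiv.Perm ℕ (i.e. α G α⁻¹ = G) if and only if for every n ≥ 1 and every orbit V of the diagonal action of G on (Fin n → ℕ), the image {α ∘ t : t ∈ V} is again an orbit of that action. -/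
/-- Auxiliary: from the orbit-image condition, the conjugate `α * g * α⁻¹`
of an element of `G` agrees with an element of `G` on any initial segment. -/
lemma stmt8_aux (G : Subgroup (Equiv.Perm ℕ)) (α : Equiv.Perm ℕ)
    (horb : ∀ n : ℕ, 1 ≤ n → ∀ t : Fin n → ℕ,
        ∃ s : Fin n → ℕ,
          (fun u : Fin n → ℕ => ⇑α ∘ u) '' MulAction.orbit G t =
            MulAction.orbit G s)
    (g : Equiv.Perm ℕ) (hg : g ∈ G) (n : ℕ) (hn : 1 ≤ n) :
    ∃ h ∈ G, ∀ i < n, (α * g * α⁻¹) i = h i := by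
  set t : Fin n → ℕ := fun i => α⁻¹ (i : ℕ) with ht
  obtain ⟨s, hs⟩ := horb n hn t
  have hmem : ∀ k ∈ G, (⇑α ∘ fun i : Fin n => k (t i)) ∈ MulAction.orbit G s := by
    intro k hk
    rw [← hs]
    exact ⟨(⟨k, hk⟩ : G) • t, MulAction.mem_orbit t (⟨k, hk⟩ : G), rfl⟩
  have h1 : (⇑α ∘ fun i : Fin n => (1 : Equiv.Perm ℕ) (t i)) ∈ MulAction.orbit G s :=
    hmem 1 G.one_mem
  have hgmem : (⇑α ∘ fun i : Fin n => g (t i)) ∈ MulAction.orbit G s := hmem g hg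
  -- both are in the same orbit, so related by an element of G
  have : (⇑α ∘ fun i : Fin n => g (t i)) ∈
      MulAction.orbit G (⇑α ∘ fun i : Fin n => (1 : Equiv.Perm ℕ) (t i)) := by
    rwa [MulAction.orbit_eq_iff.mpr h1]
  obtain ⟨⟨h, hh⟩, hEq⟩ := this
  refine ⟨h, hh, fun i hi => ?_⟩
  have := congrFun hEq ⟨i, hi⟩
  simp only [Subgroup.smul_def, Pi.smul_apply, Equiv.Perm.smul_def, Function.comp_apply,
    Equiv.Perm.one_apply, ht] at this
  simp only [Equiv.Perm.mul_apply]
  have hαα : α (α⁻¹ (i : ℕ)) = i := Equiv.apply_symm_apply α i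
  rw [hαα] at this
  exact this.symm

/-- Auxiliary: the other direction, `α⁻¹ ∘ h ∘ α` is approximated. -/
lemma stmt8_aux2 (G : Subgroup (Equiv.Perm ℕ)) (α : Equiv.Perm ℕ)
    (horb : ∀ n : ℕ, 1 ≤ n → ∀ t : Fin n → ℕ,
        ∃ s : Fin n → ℕ,
          (fun u : Fin n → ℕ => ⇑α ∘ u) '' MulAction.orbit G t =
            MulAction.orbit G s)
    (h : Equiv.Perm ℕ) (hh : h ∈ G) (n : ℕ) (hn : 1 ≤ n) :
    ∃ g ∈ G, ∀ i < n, g (α⁻¹ i) = α⁻¹ (h i) := by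
  set t : Fin n → ℕ := fun i => α⁻¹ (i : ℕ) with ht
  obtain ⟨s, hs⟩ := horb n hn t
  have h1 : (⇑α ∘ t) ∈ MulAction.orbit G s := by
    rw [← hs]
    exact ⟨t, MulAction.mem_orbit_self t, rfl⟩
  have h2 : (⟨h, hh⟩ : G) • (⇑α ∘ t) ∈ MulAction.orbit G s := by
    rw [← MulAction.orbit_eq_iff.mpr h1]
    exact MulAction.mem_orbit _ _
  rw [← hs] at h2
  obtain ⟨v, ⟨⟨g, hg⟩, hv⟩, hEq⟩ := h2
  refine ⟨g, hg, fun i hi => ?_⟩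
  subst hv
  have := congrFun hEq ⟨i, hi⟩
  simp only [Subgroup.smul_def, Pi.smul_apply, Equiv.Perm.smul_def,
    Function.comp_apply, ht] at this
  -- this : α (g (α⁻¹ i)) = h (α (α⁻¹ i))
  have hαα : α (α⁻¹ (i : ℕ)) = i := Equiv.apply_symm_apply α i
  rw [hαα] at this
  have := congrArg (⇑α⁻¹) this
  rwa [show ∀ x, α⁻¹ (α x) = x from fun x => Equiv.symm_apply_apply α x] at this

/-- For a closed subgroup `G` of `Equiv.Perm ℕ` and a
permutation `α`, `α` normalizes `G` iff for every `n ≥ 1` the image under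
`α` of every orbit of the diagonal action of `G` on `n`-tuples is again such
an orbit. -/
theorem stmt8 (G : Subgroup (Equiv.Perm ℕ)) (hcl : IsClosedSubgroup G)
    (α : Equiv.Perm ℕ) :
    α ∈ Subgroup.normalizer (G : Set (Equiv.Perm ℕ)) ↔
      ∀ n : ℕ, 1 ≤ n → ∀ t : Fin n → ℕ,
        ∃ s : Fin n → ℕ,
          (fun u : Fin n → ℕ => ⇑α ∘ u) '' MulAction.orbit G t =
            MulAction.orbit G s := by
  rw [Subgroup.mem_normalizer_iff]
  constructor
  · intro hα n hn t
    refine ⟨⇑α ∘ t, ?_⟩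
    ext u
    constructor
    · rintro ⟨v, ⟨⟨g, hg⟩, rfl⟩, rfl⟩
      refine ⟨⟨α * g * α⁻¹, (hα g).mp hg⟩, funext fun i => ?_⟩
      simp [Subgroup.smul_def, Equiv.Perm.smul_def, Equiv.Perm.mul_apply]
    · rintro ⟨⟨h, hh⟩, rfl⟩
      have hmem : α⁻¹ * h * α ∈ G := by
        apply (hα (α⁻¹ * h * α)).mpr
        have : α * (α⁻¹ * h * α) * α⁻¹ = h := by group
        rwa [this]
      refine ⟨(⟨α⁻¹ * h * α, hmem⟩ : G) • t, MulAction.mem_orbit t _, funext fun i => ?_⟩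
      simp [Subgroup.smul_def, Equiv.Perm.smul_def, Equiv.Perm.mul_apply]
  · intro horb
    have A : ∀ g ∈ G, α * g * α⁻¹ ∈ G := by
      intro g hg
      apply hcl
      intro n
      rcases Nat.eq_zero_or_pos n with rfl | hn
      · exact ⟨1, G.one_mem, fun i hi => absurd hi (Nat.not_lt_zero i)⟩
      · exact stmt8_aux G α horb g hg n hn
    have B : ∀ h ∈ G, α⁻¹ * h * α ∈ G := by
      intro h hh
      apply hcl
      intro n
      set N := (Finset.range n).sup (fun j => α j) + 1 with hN
      obtain ⟨g, hg, hgi⟩ := stmt8_aux2 G α horb h hh N (Nat.succ_le_succ (Nat.zero_le _))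
      refine ⟨g, hg, fun j hj => ?_⟩
      have hjN : α j < N := by
        have : α j ≤ (Finset.range n).sup (fun j => α j) :=
          Finset.le_sup (Finset.mem_range.mpr hj)
        omega
      have := hgi (α j) hjN
      rw [show ∀ x, α⁻¹ (α x) = x from fun x => Equiv.symm_apply_apply α x] at this
      simp only [Equiv.Perm.mul_apply]
      exact this.symm
    intro g
    constructor
    · exact fun hg => A g hg
    · intro hg
      have := B (α * g * α⁻¹) hg
      have heq : α⁻¹ * (α * g * α⁻¹) * α = g := by group
      rwa [heq] at this
end

section
/- Let k ≥ 5 and let S be a subset of the alternating group on Fin k that generates it as a group and contains a 3-cycle. Then every element g of the alternating group on Fin k can be written as a product of at most 3·k⁴ elements of S ∪ S⁻¹, i.e. there is a list l of permutations, each lying in S or having its inverse in S, with l.length ≤ 3·k⁴ and l.prod = g. -/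
open Equiv Equiv.Perm Subgroup Finset

lemma swap_list (k : ℕ) : ∀ (n : ℕ) (f : Perm (Fin k)), f.support.card ≤ n →
    ∃ l : List (Perm (Fin k)), (∀ x ∈ l, IsSwap x) ∧ l.length ≤ n ∧ l.prod = f := by
  intro n
  induction n with
  | zero =>
    intro f hf
    have : f = 1 := Equiv.Perm.card_support_eq_zero.mp (Nat.le_zero.mp hf)
    exact ⟨[], by simp, by simp, by simp [this]⟩
  | succ n ih =>
    intro f hf
    by_cases h1 : f = 1
    · exact ⟨[], by simp, by simp, by simp [h1]⟩
    · obtain ⟨x, hx⟩ : ∃ x, f x ≠ x := by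
        by_contra h
        push_neg at h
        exact h1 (Equiv.ext h)
      have hlt : (Equiv.swap x (f x) * f).support.card < f.support.card :=
        Equiv.Perm.card_support_swap_mul hx
      obtain ⟨l, hl1, hl2, hl3⟩ := ih (Equiv.swap x (f x) * f) (by omega)
      refine ⟨Equiv.swap x (f x) :: l, ?_, by simp; omega, ?_⟩
      · intro y hy
        rcases List.mem_cons.mp hy with rfl | hy
        · exact ⟨x, f x, hx.symm, rfl⟩
        · exact hl1 y hy
      · simp [hl3, ← mul_assoc]

lemma pair_threecycles {k : ℕ} (a b c d : Fin k) (hab : a ≠ b) (hcd : c ≠ d) :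
    ∃ m : List (Perm (Fin k)), (∀ x ∈ m, IsThreeCycle x) ∧ m.length ≤ 2 ∧
      m.prod = Equiv.swap a b * Equiv.swap c d := by
  by_cases heq : Equiv.swap a b = Equiv.swap c d
  · exact ⟨[], by simp, by simp, by simp [heq, Equiv.swap_mul_self]⟩
  by_cases hac : a = c
  · subst hac
    have hbd : b ≠ d := fun h => heq (by rw [h])
    exact ⟨[Equiv.swap a b * Equiv.swap a d],
      by intro x hx; rw [List.mem_singleton] at hx; subst hx
         exact isThreeCycle_swap_mul_swap_same hab hcd hbd,
      by simp, by simp⟩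
  by_cases had : a = d
  · subst had
    have hbc : b ≠ c := fun h => heq (by rw [h, Equiv.swap_comm])
    refine ⟨[Equiv.swap a b * Equiv.swap c a], ?_, by simp, by simp⟩
    intro x hx; rw [List.mem_singleton] at hx; subst hx
    rw [Equiv.swap_comm c a]
    exact isThreeCycle_swap_mul_swap_same hab (Ne.symm hcd) hbc
  by_cases hbc : b = c
  · subst hbc
    have had' : a ≠ d := had
    refine ⟨[Equiv.swap a b * Equiv.swap b d], ?_, by simp, by simp⟩
    intro x hx; rw [List.mem_singleton] at hx; subst hx
    rw [Equiv.swap_comm a b]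
    exact isThreeCycle_swap_mul_swap_same (Ne.symm hab) hcd had'
  by_cases hbd : b = d
  · subst hbd
    refine ⟨[Equiv.swap a b * Equiv.swap c b], ?_, by simp, by simp⟩
    intro x hx; rw [List.mem_singleton] at hx; subst hx
    rw [Equiv.swap_comm a b, Equiv.swap_comm c b]
    exact isThreeCycle_swap_mul_swap_same (Ne.symm hab) (Ne.symm hcd) hac
  · refine ⟨[Equiv.swap a b * Equiv.swap a c, Equiv.swap c a * Equiv.swap c d], ?_, by simp, ?_⟩
    · intro x hx
      rcases List.mem_cons.mp hx with rfl | hx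
      · exact isThreeCycle_swap_mul_swap_same hab hac hbc
      · rw [List.mem_singleton] at hx; subst hx
        exact isThreeCycle_swap_mul_swap_same (Ne.symm hac) hcd had
    · simp only [List.prod_cons, List.prod_nil, mul_one]
      rw [mul_assoc, ← mul_assoc (Equiv.swap a c), Equiv.swap_comm c a,
        Equiv.swap_mul_self, one_mul]

lemma threecycle_list {k : ℕ} : ∀ (n : ℕ) (l : List (Perm (Fin k))), l.length ≤ n →
    (∀ x ∈ l, IsSwap x) → Even l.length →
    ∃ m : List (Perm (Fin k)), (∀ x ∈ m, IsThreeCycle x) ∧ m.length ≤ l.length ∧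
      m.prod = l.prod := by
  intro n
  induction n with
  | zero =>
    intro l hl _ _
    have : l = [] := List.length_eq_zero_iff.mp (Nat.le_zero.mp hl)
    exact ⟨[], by simp, by simp, by simp [this]⟩
  | succ n ih =>
    intro l hl hsw hev
    match l with
    | [] => exact ⟨[], by simp, by simp, by simp⟩
    | [x] => simp at hev
    | x :: y :: t =>
      have ht : t.length ≤ n := by simp at hl; omega
      have htev : Even t.length := by
        simp only [List.length_cons] at hev
        rcases hev with ⟨r, hr⟩
        exact ⟨r - 1, by omega⟩
      obtain ⟨m1, hm1, hm1l, hm1p⟩ := ih t ht (fun z hz => hsw z (by simp [hz])) htev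
      obtain ⟨a, b, hab, rfl⟩ := hsw x (by simp)
      obtain ⟨c, d, hcd, rfl⟩ := hsw y (by simp)
      obtain ⟨p, hp, hpl, hpp⟩ := pair_threecycles a b c d hab hcd
      refine ⟨p ++ m1, ?_, ?_, ?_⟩
      · intro z hz
        rcases List.mem_append.mp hz with h | h
        · exact hp z h
        · exact hm1 z h
      · simp only [List.length_append, List.length_cons]; omega
      · simp [List.prod_append, hpp, hm1p, mul_assoc]

lemma threecycle_structure {k : ℕ} {τ : Perm (Fin k)} (hτ : IsThreeCycle τ)
    {a : Fin k} (ha : a ∈ τ.support) :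
    τ.support = {a, τ a, τ (τ a)} ∧ τ (τ (τ a)) = a := by
  have h3 : τ ^ 3 = 1 := by
    rw [← hτ.orderOf]; exact pow_orderOf_eq_one τ
  have hcube : τ (τ (τ a)) = a := by
    have := Equiv.ext_iff.mp h3 a
    simpa [pow_succ, Equiv.Perm.mul_apply] using this
  have h1 : τ a ≠ a := Equiv.Perm.mem_support.mp ha
  have ha2 : τ a ∈ τ.support := Equiv.Perm.apply_mem_support.mpr ha
  have h2 : τ (τ a) ≠ τ a := Equiv.Perm.mem_support.mp ha2
  have h0 : τ (τ a) ≠ a := by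
    intro h
    apply h1
    have h' := congrArg τ h
    rw [hcube] at h'
    exact h'.symm
  refine ⟨?_, hcube⟩
  have hsub : ({a, τ a, τ (τ a)} : Finset (Fin k)) ⊆ τ.support := by
    intro x hx
    simp only [Finset.mem_insert, Finset.mem_singleton] at hx
    rcases hx with rfl | rfl | rfl
    · exact ha
    · exact ha2
    · exact Equiv.Perm.apply_mem_support.mpr ha2
  have hcard : ({a, τ a, τ (τ a)} : Finset (Fin k)).card = 3 := by
    rw [Finset.card_insert_of_notMem (by simp [Ne.symm h1, Ne.symm h0]),
      Finset.card_insert_of_notMem (by simp [Ne.symm h2])]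
    simp
  exact (Finset.eq_of_subset_of_card_le hsub (by rw [hτ.card_support, hcard])).symm

lemma threecycle_card (k : ℕ) (hk : 0 < k) [DecidablePred (Equiv.Perm.IsThreeCycle (α := Fin k))] :
    (Finset.univ.filter (fun τ : Perm (Fin k) => τ.IsThreeCycle)).card ≤ k ^ 3 := by
  classical
  set i : Perm (Fin k) → Fin k × Fin k × Fin k := fun τ =>
    if h : τ.support.Nonempty then
      (τ.support.min' h, τ (τ.support.min' h), τ (τ (τ.support.min' h)))
    else (⟨0, hk⟩, ⟨0, hk⟩, ⟨0, hk⟩)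
  have hinj : Set.InjOn i (Finset.univ.filter
      (fun τ : Perm (Fin k) => τ.IsThreeCycle)) := by
    intro τ₁ h1 τ₂ h2 hi
    simp only [Finset.coe_filter, Set.mem_setOf_eq] at h1 h2
    have hn1 : τ₁.support.Nonempty :=
      Finset.card_pos.mp (by rw [h1.2.card_support]; norm_num)
    have hn2 : τ₂.support.Nonempty :=
      Finset.card_pos.mp (by rw [h2.2.card_support]; norm_num)
    simp only [i, dif_pos hn1, dif_pos hn2, Prod.mk.injEq] at hi
    obtain ⟨he1, he2, he3⟩ := hi
    set a := τ₁.support.min' hn1 with ha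
    have hmem1 : a ∈ τ₁.support := τ₁.support.min'_mem hn1
    have hmem2 : τ₂.support.min' hn2 ∈ τ₂.support := τ₂.support.min'_mem hn2
    rw [← he1] at hmem2 he2 he3
    obtain ⟨hs1, hc1⟩ := threecycle_structure h1.2 hmem1
    obtain ⟨hs2, hc2⟩ := threecycle_structure h2.2 hmem2
    apply Equiv.ext
    intro x
    by_cases hx : x ∈ τ₁.support
    · rw [hs1] at hx
      simp only [Finset.mem_insert, Finset.mem_singleton] at hx
      rcases hx with rfl | rfl | rfl
      · exact he2
      · rw [he3]; exact congrArg _ he2.symm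
      · rw [hc1, he3, hc2]
    · have hx2 : x ∉ τ₂.support := by
        rw [hs2, ← he3, ← he2]
        rwa [hs1] at hx
      rw [Equiv.Perm.notMem_support.mp hx, Equiv.Perm.notMem_support.mp hx2]
  calc (Finset.univ.filter (fun τ : Perm (Fin k) => τ.IsThreeCycle)).card
      ≤ (Finset.univ : Finset (Fin k × Fin k × Fin k)).card :=
        Finset.card_le_card_of_injOn i (fun _ _ => Finset.mem_univ _) hinj
    _ = k ^ 3 := by simp [pow_succ]; ring

/-- If `k ≥ 5` and `S` is a subset of the alternating group on
`Fin k` that generates it and contains a 3-cycle, then every element of the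
alternating group is a product of at most `3 * k ^ 4` elements of
`S ∪ S⁻¹`. -/
theorem stmt10 (k : ℕ) (hk : 5 ≤ k) (S : Set (Equiv.Perm (Fin k)))
    (hsub : ∀ σ ∈ S, σ ∈ alternatingGroup (Fin k))
    (hgen : Subgroup.closure S = alternatingGroup (Fin k))
    (h3 : ∃ σ ∈ S, Equiv.Perm.IsThreeCycle σ) :
    ∀ g ∈ alternatingGroup (Fin k),
      ∃ l : List (Equiv.Perm (Fin k)),
        (∀ x ∈ l, x ∈ S ∨ x⁻¹ ∈ S) ∧ l.length ≤ 3 * k ^ 4 ∧ l.prod = g := by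
  classical
  obtain ⟨σ, hσS, hσ3⟩ := h3
  set N := k ^ 3 with hN
  have hk0 : 0 < k := by omega
  have hN1 : 1 ≤ N := Nat.one_le_iff_ne_zero.mpr (by positivity)
  set Good : Perm (Fin k) → Prop := fun x => x ∈ S ∨ x⁻¹ ∈ S with hGood
  set Reach : ℕ → Perm (Fin k) → Prop := fun n τ =>
    ∃ w : List (Perm (Fin k)), (∀ x ∈ w, Good x) ∧ w.length ≤ n ∧
      w.prod * σ * w.prod⁻¹ = τ with hReach
  have reach_mono : ∀ {m n : ℕ} {τ}, m ≤ n → Reach m τ → Reach n τ := by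
    rintro m n τ hmn ⟨w, h1, h2, h3⟩
    exact ⟨w, h1, h2.trans hmn, h3⟩
  have reach_three : ∀ {n τ}, Reach n τ → IsThreeCycle τ := by
    rintro n τ ⟨w, -, -, rfl⟩
    rw [IsThreeCycle, Equiv.Perm.cycleType_conj]
    exact hσ3
  have reach_conj : ∀ {n s τ}, Good s → Reach n τ → Reach (n + 1) (s * τ * s⁻¹) := by
    rintro n s τ hs ⟨w, h1, h2, rfl⟩
    refine ⟨s :: w, ?_, by simp [h2], by simp [mul_assoc]⟩
    intro x hx
    rcases List.mem_cons.mp hx with rfl | hx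
    · exact hs
    · exact h1 x hx
  have reach_peel : ∀ {n τ}, Reach (n + 1) τ →
      Reach n τ ∨ ∃ s τ', Good s ∧ Reach n τ' ∧ τ = s * τ' * s⁻¹ := by
    rintro n τ ⟨w, h1, h2, rfl⟩
    match w with
    | [] => exact Or.inl ⟨[], by simp, by simp, rfl⟩
    | s :: w' =>
      refine Or.inr ⟨s, w'.prod * σ * w'.prod⁻¹, h1 s (by simp), ?_, by simp [mul_assoc]⟩
      exact ⟨w', fun x hx => h1 x (by simp [hx]), by simp at h2; omega, rfl⟩
  set F : ℕ → Finset (Perm (Fin k)) := fun n => Finset.univ.filter (Reach n) with hF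
  have memF : ∀ {n τ}, τ ∈ F n ↔ Reach n τ := by
    intro n τ; simp [hF]
  have Fmono : ∀ n, F n ⊆ F (n + 1) := by
    intro n τ hτ
    exact memF.mpr (reach_mono (Nat.le_succ n) (memF.mp hτ))
  have hσ0 : Reach 0 σ := ⟨[], by simp, by simp, by simp⟩
  obtain ⟨n0, hn0lt, hstab⟩ : ∃ n < N, F n = F (n + 1) := by
    by_contra hc
    push_neg at hc
    have hcard : ∀ n ≤ N, n < (F n).card := by
      intro n hn
      induction n with
      | zero => exact Finset.card_pos.mpr ⟨σ, memF.mpr hσ0⟩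
      | succ n ih =>
        have h1 : n < (F n).card := ih (by omega)
        have h2 : F n ⊂ F (n + 1) :=
          Finset.ssubset_iff_subset_ne.mpr ⟨Fmono n, hc n (by omega)⟩
        have := Finset.card_lt_card h2
        omega
    have hsubT : F N ⊆ Finset.univ.filter (fun τ : Perm (Fin k) => τ.IsThreeCycle) := by
      intro τ hτ
      simp only [Finset.mem_filter, Finset.mem_univ, true_and]
      exact reach_three (memF.mp hτ)
    have := Finset.card_le_card hsubT
    have := threecycle_card k hk0
    have := hcard N le_rfl
    omega
  have reach_down : ∀ {τ}, Reach (n0 + 1) τ → Reach n0 τ := by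
    intro τ h
    have : τ ∈ F (n0 + 1) := memF.mpr h
    rw [← hstab] at this
    exact memF.mp this
  have key : ∀ g ∈ Subgroup.closure S, Reach n0 (g * σ * g⁻¹) := by
    intro g hg
    induction hg using Subgroup.closure_induction_left with
    | one => simpa using reach_mono (Nat.zero_le n0) hσ0
    | mul_left x hx y hy ih =>
      have h := reach_down (reach_conj (Or.inl hx) ih)
      have heq : x * y * σ * (x * y)⁻¹ = x * (y * σ * y⁻¹) * x⁻¹ := by group
      rwa [heq]
    | inv_mul_cancel x hx y hy ih =>
      have hxg : Good x⁻¹ := Or.inr (by simpa using hx)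
      have h := reach_down (reach_conj hxg ih)
      have heq : x⁻¹ * y * σ * (x⁻¹ * y)⁻¹ = x⁻¹ * (y * σ * y⁻¹) * x⁻¹⁻¹ := by group
      rwa [heq]
  have word_of_three : ∀ τ : Perm (Fin k), IsThreeCycle τ →
      ∃ l : List (Perm (Fin k)), (∀ x ∈ l, Good x) ∧ l.length ≤ 2 * k ^ 3 ∧ l.prod = τ := by
    intro τ hτ
    have h5 : 5 ≤ Nat.card (Fin k) := by simpa using hk
    have hconj := alternatingGroup.isThreeCycle_isConj h5
      (σ := ⟨σ, hσ3.mem_alternatingGroup⟩) (τ := ⟨τ, hτ.mem_alternatingGroup⟩) hσ3 hτ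
    obtain ⟨c, hc⟩ := isConj_iff.mp hconj
    have hc' : (c : Perm (Fin k)) * σ * (c : Perm (Fin k))⁻¹ = τ := by
      have := congrArg (fun x : alternatingGroup (Fin k) => (x : Perm (Fin k))) hc
      simpa using this
    have hcmem : (c : Perm (Fin k)) ∈ Subgroup.closure S := by
      rw [hgen]; exact c.2
    have hreach : Reach n0 τ := by
      rw [← hc']; exact key _ hcmem
    obtain ⟨w, hw1, hw2, hw3⟩ := hreach
    refine ⟨w ++ σ :: (w.map fun x => x⁻¹).reverse, ?_, ?_, ?_⟩
    · intro x hx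
      rcases List.mem_append.mp hx with h | h
      · exact hw1 x h
      · rcases List.mem_cons.mp h with rfl | h
        · exact Or.inl hσS
        · rw [List.mem_reverse, List.mem_map] at h
          obtain ⟨y, hy, rfl⟩ := h
          rcases hw1 y hy with h | h
          · exact Or.inr (by simpa using h)
          · exact Or.inl h
    · simp only [List.length_append, List.length_cons, List.length_reverse, List.length_map]
      omega
    · rw [List.prod_append, List.prod_cons, ← List.prod_inv_reverse, ← mul_assoc, hw3]
  have words : ∀ m : List (Perm (Fin k)), (∀ x ∈ m, IsThreeCycle x) →
      ∃ L : List (Perm (Fin k)), (∀ x ∈ L, Good x) ∧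
        L.length ≤ m.length * (2 * k ^ 3) ∧ L.prod = m.prod := by
    intro m
    induction m with
    | nil => exact fun _ => ⟨[], by simp, by simp, by simp⟩
    | cons τ t ih =>
      intro hm
      obtain ⟨L, hL1, hL2, hL3⟩ := ih (fun x hx => hm x (by simp [hx]))
      obtain ⟨l, hl1, hl2, hl3⟩ := word_of_three τ (hm τ (by simp))
      refine ⟨l ++ L, ?_, ?_, ?_⟩
      · intro x hx
        rcases List.mem_append.mp hx with h | h
        · exact hl1 x h
        · exact hL1 x h
      · simp only [List.length_append, List.length_cons]
        calc l.length + L.length ≤ 2 * k ^ 3 + t.length * (2 * k ^ 3) := by omega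
          _ = (t.length + 1) * (2 * k ^ 3) := by ring
      · simp [List.prod_append, hl3, hL3]
  intro g hg
  have hsupp : g.support.card ≤ k := by
    have := Finset.card_le_univ g.support
    simpa using this
  obtain ⟨l1, hl1sw, hl1len, hl1prod⟩ := swap_list k k g hsupp
  have heven : Even l1.length := by
    rw [← Equiv.Perm.prod_list_swap_mem_alternatingGroup_iff_even_length hl1sw, hl1prod]
    exact hg
  obtain ⟨m, hm3, hmlen, hmprod⟩ := threecycle_list l1.length l1 le_rfl hl1sw heven
  obtain ⟨L, hL1, hL2, hL3⟩ := words m hm3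
  refine ⟨L, hL1, ?_, by rw [hL3, hmprod, hl1prod]⟩
  calc L.length ≤ m.length * (2 * k ^ 3) := hL2
    _ ≤ k * (2 * k ^ 3) := Nat.mul_le_mul_right _ (by omega)
    _ = 2 * k ^ 4 := by ring
    _ ≤ 3 * k ^ 4 := by omega
end

section
/- Let Z be a metric space whose distance function d satisfies the ultrametric inequality d(x, z) ≤ max (d(x, y)) (d(y, z)) for all x, y, z, and satisfies d(x, y) ≤ 1 for all x, y. Define ρ on pairs (r, x) with r a nonnegative real and x ∈ Z by ρ((r₀, x₀), (r₁, x₁)) = |r₀ − r₁| + min r₀ r₁ * d(x₀, x₁). Then ρ satisfies the triangle inequality: for all nonnegative reals r₀, r₁, r₂ and all x₀, x₁, x₂ ∈ Z, ρ((r₀, x₀), (r₂, x₂)) ≤ ρ((r₀, x₀), (r₁, x₁)) + ρ((r₁, x₁), (r₂, x₂)). -/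
/-- If `Z` is a metric space whose distance satisfies the
ultrametric inequality and is bounded by `1`, then
`ρ((r₀,x₀),(r₁,x₁)) = |r₀ - r₁| + min r₀ r₁ * dist x₀ x₁` satisfies the
triangle inequality on pairs `(r, x)` with `r ≥ 0`. -/
theorem stmt11 (Z : Type*) [MetricSpace Z]
    (hult : ∀ x y z : Z, dist x z ≤ max (dist x y) (dist y z))
    (hbdd : ∀ x y : Z, dist x y ≤ 1)
    (r₀ r₁ r₂ : ℝ) (h₀ : 0 ≤ r₀) (h₁ : 0 ≤ r₁) (h₂ : 0 ≤ r₂)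
    (x₀ x₁ x₂ : Z) :
    |r₀ - r₂| + min r₀ r₂ * dist x₀ x₂ ≤
      (|r₀ - r₁| + min r₀ r₁ * dist x₀ x₁) +
      (|r₁ - r₂| + min r₁ r₂ * dist x₁ x₂) := by
  have hd01 : (0:ℝ) ≤ dist x₀ x₁ := dist_nonneg
  have hd12 : (0:ℝ) ≤ dist x₁ x₂ := dist_nonneg
  have hd02 : (0:ℝ) ≤ dist x₀ x₂ := dist_nonneg
  have habs : |r₀ - r₂| ≤ |r₀ - r₁| + |r₁ - r₂| := abs_sub_le r₀ r₁ r₂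
  rcases le_or_gt r₁ (min r₀ r₂) with h | h
  · -- r₁ ≤ r₀ and r₁ ≤ r₂
    have h10 : r₁ ≤ r₀ := le_trans h (min_le_left _ _)
    have h12 : r₁ ≤ r₂ := le_trans h (min_le_right _ _)
    have e1 : min r₀ r₁ = r₁ := min_eq_right h10
    have e2 : min r₁ r₂ = r₁ := min_eq_left h12
    have a01 : |r₀ - r₁| = r₀ - r₁ := abs_of_nonneg (by linarith)
    have a12 : |r₁ - r₂| = r₂ - r₁ := by
      rw [abs_sub_comm]; exact abs_of_nonneg (by linarith)
    have a02 : |r₀ - r₂| = r₀ + r₂ - 2 * min r₀ r₂ := by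
      rcases le_total r₀ r₂ with hh | hh
      · rw [min_eq_left hh, abs_sub_comm, abs_of_nonneg (by linarith)]; ring
      · rw [min_eq_right hh, abs_of_nonneg (by linarith)]; ring
    have hsum : dist x₀ x₂ ≤ dist x₀ x₁ + dist x₁ x₂ := dist_triangle _ _ _
    have hb : dist x₀ x₂ ≤ 1 := hbdd _ _
    have hm0 : min r₀ r₂ ≤ r₀ := min_le_left _ _
    have hm2 : min r₀ r₂ ≤ r₂ := min_le_right _ _
    rw [e1, e2, a01, a12, a02]
    nlinarith [mul_le_mul_of_nonneg_left hsum h₁,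
      mul_le_mul_of_nonneg_left hb (sub_nonneg.2 h : (0:ℝ) ≤ min r₀ r₂ - r₁)]
  · -- min r₀ r₂ < r₁
    have hm01 : min r₀ r₂ ≤ min r₀ r₁ :=
      le_min (min_le_left _ _) (le_of_lt h)
    have hm12 : min r₀ r₂ ≤ min r₁ r₂ :=
      le_min (le_of_lt h) (min_le_right _ _)
    have hmnn : (0:ℝ) ≤ min r₀ r₂ := le_min h₀ h₂
    have hm01nn : (0:ℝ) ≤ min r₀ r₁ := le_min h₀ h₁
    have hm12nn : (0:ℝ) ≤ min r₁ r₂ := le_min h₁ h₂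
    rcases max_cases (dist x₀ x₁) (dist x₁ x₂) with ⟨he, _⟩ | ⟨he, _⟩ <;>
      have hu := (hult x₀ x₁ x₂).trans_eq he
    · have : min r₀ r₂ * dist x₀ x₂ ≤ min r₀ r₁ * dist x₀ x₁ :=
        mul_le_mul hm01 hu hd02 hm01nn
      nlinarith [mul_nonneg hm12nn hd12]
    · have : min r₀ r₂ * dist x₀ x₂ ≤ min r₁ r₂ * dist x₁ x₂ :=
        mul_le_mul hm12 hu hd02 hm12nn
      nlinarith [mul_nonneg hm01nn hd01]
end

section
/- Let (Z_k) be a sequence of points of Cantor space and (c_k) a sequence of reals with c_k > 0 for all k and ∑_k c_k = 1, and let μ = ∑_k c_k · δ_{Z_k}. Then μ is Martin-Löf absolutely continuous if and only if every Z_k is Martin-Löf random. -/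
open MeasureTheory
open scoped ENNReal

/-- The basic clopen cylinder `[σ]` of a finite binary string `σ`:
all `Z : ℕ → Bool` extending `σ`. -/
def cyl (σ : List Bool) : Set (ℕ → Bool) :=
  {Z | ∀ i : Fin σ.length, Z i = σ.get i}

/-- The `m`-th open set `G_m` determined by a test `f`: the union of the
cylinders `[σ]` over the strings `σ` enumerated by `f m`. -/
def testSet (f : ℕ → ℕ → Option (List Bool)) (m : ℕ) : Set (ℕ → Bool) :=
  ⋃ σ ∈ {σ : List Bool | ∃ i, f m i = some σ}, cyl σ

/-- `lam` is the fair-coin product probability measure on Cantor space: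
the (unique) Borel probability measure giving each cylinder `[σ]` measure
`2 ^ (-|σ|)`. -/
def IsFairCoin (lam : Measure (ℕ → Bool)) : Prop :=
  IsProbabilityMeasure lam ∧ ∀ σ : List Bool, lam (cyl σ) = 2⁻¹ ^ σ.length

/-- A Martin-Löf test with respect to the fair-coin measure `lam`: a
computable `f : ℕ → ℕ → Option (List Bool)` whose associated open sets
`G_m` satisfy `lam (G_m) ≤ 2 ^ (-m)`. -/
def IsMLTest (lam : Measure (ℕ → Bool)) (f : ℕ → ℕ → Option (List Bool)) : Prop :=
  Computable₂ f ∧ ∀ m : ℕ, lam (testSet f m) ≤ 2⁻¹ ^ m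

/-- `Z` is Martin-Löf random: it passes every Martin-Löf test. -/
def MLRandom (lam : Measure (ℕ → Bool)) (Z : ℕ → Bool) : Prop :=
  ∀ f, IsMLTest lam f → ∃ m, Z ∉ testSet f m

/-- A measure `μ` is Martin-Löf absolutely continuous:
`inf_m μ (G_m) = 0` for every Martin-Löf test. -/
def MLAC (lam μ : Measure (ℕ → Bool)) : Prop :=
  ∀ f, IsMLTest lam f → ⨅ m, μ (testSet f m) = 0

lemma measurable_cyl (σ : List Bool) : MeasurableSet (cyl σ) := by
  have : cyl σ = ⋂ i : Fin σ.length, (fun Z : ℕ → Bool => Z i) ⁻¹' {σ.get i} := by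
    ext x; simp [cyl, Set.mem_iInter]
  rw [this]
  exact MeasurableSet.iInter fun i =>
    (measurable_pi_apply (i : ℕ)) (measurableSet_singleton _)

lemma measurable_testSet (f : ℕ → ℕ → Option (List Bool)) (m : ℕ) :
    MeasurableSet (testSet f m) :=
  MeasurableSet.biUnion (Set.to_countable _) fun σ _ => measurable_cyl σ

lemma shiftTest_isMLTest (lam : Measure (ℕ → Bool)) (f : ℕ → ℕ → Option (List Bool))
    (hf : IsMLTest lam f) :
    IsMLTest lam (fun m i => f (m + 1 + (Nat.unpair i).1) (Nat.unpair i).2) := by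
  constructor
  · have h1 : Computable fun p : ℕ × ℕ => p.1 + 1 + (Nat.unpair p.2).1 :=
      (Primrec.nat_add.comp (Primrec.succ.comp Primrec.fst)
        (Primrec.fst.comp (Primrec.unpair.comp Primrec.snd))).to_comp
    have h2 : Computable fun p : ℕ × ℕ => (Nat.unpair p.2).2 :=
      (Primrec.snd.comp (Primrec.unpair.comp Primrec.snd)).to_comp
    exact hf.1.comp h1 h2
  · intro m
    have hgset : testSet (fun m i => f (m + 1 + (Nat.unpair i).1) (Nat.unpair i).2) m
        = ⋃ j, testSet f (m + 1 + j) := by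
      ext x
      simp only [testSet, Set.mem_iUnion, Set.mem_setOf_eq]
      constructor
      · rintro ⟨σ, ⟨i, hi⟩, hx⟩
        exact ⟨(Nat.unpair i).1, σ, ⟨(Nat.unpair i).2, hi⟩, hx⟩
      · rintro ⟨j, σ, ⟨i, hi⟩, hx⟩
        refine ⟨σ, ⟨Nat.pair j i, ?_⟩, hx⟩
        simpa [Nat.unpair_pair] using hi
    rw [hgset]
    calc lam (⋃ j, testSet f (m + 1 + j)) ≤ ∑' j, lam (testSet f (m + 1 + j)) :=
          measure_iUnion_le _
      _ ≤ ∑' j : ℕ, (2⁻¹ : ℝ≥0∞) ^ (m + 1 + j) := ENNReal.tsum_le_tsum fun j => hf.2 _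
      _ = (2⁻¹ : ℝ≥0∞) ^ (m + 1) * ∑' j : ℕ, (2⁻¹ : ℝ≥0∞) ^ j := by
          simp [pow_add, ENNReal.tsum_mul_left]
      _ = 2⁻¹ ^ m := by
          rw [ENNReal.tsum_geometric, pow_succ, mul_assoc]
          norm_num
          rw [ENNReal.inv_mul_cancel] <;> norm_num

lemma shiftTest_set (f : ℕ → ℕ → Option (List Bool)) (m : ℕ) :
    testSet (fun m i => f (m + 1 + (Nat.unpair i).1) (Nat.unpair i).2) m
      = ⋃ j, testSet f (m + 1 + j) := by
  ext x
  simp only [testSet, Set.mem_iUnion, Set.mem_setOf_eq]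
  constructor
  · rintro ⟨σ, ⟨i, hi⟩, hx⟩
    exact ⟨(Nat.unpair i).1, σ, ⟨(Nat.unpair i).2, hi⟩, hx⟩
  · rintro ⟨j, σ, ⟨i, hi⟩, hx⟩
    refine ⟨σ, ⟨Nat.pair j i, ?_⟩, hx⟩
    simpa [Nat.unpair_pair] using hi

/-- If `c k > 0` with `∑ c k = 1`, then
`μ = ∑_k c_k · δ_{Z k}` is Martin-Löf absolutely continuous iff every `Z k`
is Martin-Löf random. -/
theorem stmt13 (lam : Measure (ℕ → Bool)) (hlam : IsFairCoin lam)
    (Z : ℕ → (ℕ → Bool)) (c : ℕ → ℝ) (hc : ∀ k, 0 < c k) (hsum : ∑' k, c k = 1) :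
    MLAC lam (Measure.sum fun k => ENNReal.ofReal (c k) • Measure.dirac (Z k)) ↔
      ∀ k, MLRandom lam (Z k) := by
  set mu : Measure (ℕ → Bool) :=
    Measure.sum fun k => ENNReal.ofReal (c k) • Measure.dirac (Z k) with hmu
  have hmuapp : ∀ f m, mu (testSet f m) =
      ∑' j, ENNReal.ofReal (c j) * Measure.dirac (Z j) (testSet f m) := by
    intro f m
    rw [hmu, Measure.sum_apply _ (measurable_testSet f m)]
    simp [Measure.smul_apply, smul_eq_mul]
  constructor
  · -- MLAC → each Z k is random
    intro h k f hf
    have h0 := h f hf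
    have hpos : (0 : ℝ≥0∞) < ENNReal.ofReal (c k) := ENNReal.ofReal_pos.2 (hc k)
    obtain ⟨m, hm⟩ : ∃ m, mu (testSet f m) < ENNReal.ofReal (c k) := by
      apply iInf_lt_iff.mp
      rw [h0]; exact hpos
    refine ⟨m, fun hmem => ?_⟩
    have hle : ENNReal.ofReal (c k) ≤ mu (testSet f m) := by
      calc ENNReal.ofReal (c k)
          = ENNReal.ofReal (c k) * Measure.dirac (Z k) (testSet f m) := by
            rw [Measure.dirac_apply_of_mem hmem, mul_one]
        _ ≤ ∑' j, ENNReal.ofReal (c j) * Measure.dirac (Z j) (testSet f m) :=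
            ENNReal.le_tsum k
        _ = mu (testSet f m) := (hmuapp f m).symm
    exact absurd hm (not_lt.2 hle)
  · -- each Z k random → MLAC
    intro h f hf
    have hg := shiftTest_isMLTest lam f hf
    choose M hM using fun k => h k _ hg
    have hnot : ∀ k m, M k < m → Z k ∉ testSet f m := by
      intro k m hm hmem
      apply hM k
      rw [shiftTest_set]
      exact Set.mem_iUnion.2 ⟨m - (M k + 1),
        by rwa [show M k + 1 + (m - (M k + 1)) = m by omega]⟩
    have hcs : Summable c := by
      by_contra hns
      rw [tsum_eq_zero_of_not_summable hns] at hsum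
      norm_num at hsum
    have hofsum : ∑' j, ENNReal.ofReal (c j) = 1 := by
      rw [← ENNReal.ofReal_tsum_of_nonneg (fun j => (hc j).le) hcs, hsum,
        ENNReal.ofReal_one]
    have hne : (∑' j, ENNReal.ofReal (c j)) ≠ ∞ := by
      rw [hofsum]; exact ENNReal.one_ne_top
    rw [show (0:ℝ≥0∞) = ⊥ from rfl, iInf_eq_bot]
    intro ε hε
    obtain ⟨K, hK⟩ : ∃ K, ∑' j : ℕ, ENNReal.ofReal (c (j + K)) < ε := by
      have htend := ENNReal.tendsto_sum_nat_add (fun j => ENNReal.ofReal (c j)) hne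
      exact (htend.eventually_lt_const hε).exists
    set m : ℕ := (Finset.range K).sup M + 1 with hmdef
    refine ⟨m, lt_of_le_of_lt ?_ hK⟩
    have hzero : ∀ k < K, ENNReal.ofReal (c k) * Measure.dirac (Z k) (testSet f m) = 0 := by
      intro k hk
      have hkm : M k < m := by
        have : M k ≤ (Finset.range K).sup M := Finset.le_sup (Finset.mem_range.2 hk)
        omega
      rw [Measure.dirac_apply' _ (measurable_testSet f m),
        Set.indicator_of_notMem (hnot k m hkm), mul_zero]
    rw [hmuapp f m]
    have hsplit := Summable.sum_add_tsum_nat_add' (f := fun j =>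
      ENNReal.ofReal (c j) * Measure.dirac (Z j) (testSet f m)) (k := K) ENNReal.summable
    rw [← hsplit, Finset.sum_eq_zero (fun k hk => hzero k (Finset.mem_range.1 hk)), zero_add]
    refine ENNReal.tsum_le_tsum fun j => ?_
    calc ENNReal.ofReal (c (j + K)) * Measure.dirac (Z (j + K)) (testSet f m)
        ≤ ENNReal.ofReal (c (j + K)) * 1 := by
          exact mul_le_mul_right prob_le_one _
      _ = ENNReal.ofReal (c (j + K)) := mul_one _
end

section
/- A Borel probability measure μ on Cantor space is Martin-Löf absolutely continuous if and only if μ passes every Solovay test. -/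
open MeasureTheory
open scoped ENNReal

/-- A Solovay test with respect to the fair-coin measure `lam`: a computable
`g` whose associated open sets `S_k` satisfy `∑_k lam (S_k) < ∞`. -/
def IsSolovayTest (lam : Measure (ℕ → Bool)) (g : ℕ → ℕ → Option (List Bool)) : Prop :=
  Computable₂ g ∧ ∑' k, lam (testSet g k) < ⊤

lemma cyl_anti {σ τ : List Bool} (h : τ <+: σ) : cyl σ ⊆ cyl τ := by
  intro Z hZ i
  obtain ⟨r, rfl⟩ := h
  have hi : (i : ℕ) < (τ ++ r).length := by
    simp only [List.length_append]; omega
  have := hZ ⟨i, hi⟩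
  rw [this]
  simp [List.getElem_append_left i.isLt]

lemma cyl_comparable {σ τ : List Bool} {Z : ℕ → Bool} (hσ : Z ∈ cyl σ) (hτ : Z ∈ cyl τ) :
    σ <+: τ ∨ τ <+: σ := by
  rcases le_total σ.length τ.length with h | h
  · left
    rw [List.prefix_iff_eq_take]
    apply List.ext_get (by simp [h])
    intro n h1 h2
    have := hσ ⟨n, h1⟩
    have h3 : n < τ.length := lt_of_lt_of_le h1 h
    have := hτ ⟨n, h3⟩
    simp_all [List.getElem_take]
  · right
    rw [List.prefix_iff_eq_take]
    apply List.ext_get (by simp [h])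
    intro n h1 h2
    have := hτ ⟨n, h1⟩
    have h3 : n < σ.length := lt_of_lt_of_le h1 h
    have := hσ ⟨n, h3⟩
    simp_all [List.getElem_take]

lemma count_bound (lam : Measure (ℕ → Bool)) (g : ℕ → ℕ → Option (List Bool)) (N : ℕ)
    (E : Set (ℕ → Bool)) (hE : MeasurableSet E)
    (hsub : ∀ Z ∈ E, ∃ F : Finset ℕ, F.card = N ∧ ∀ k ∈ F, Z ∈ testSet g k) :
    (N : ℝ≥0∞) * lam E ≤ ∑' k, lam (testSet g k) := by
  have key : ∀ Z, E.indicator (fun _ => (N : ℝ≥0∞)) Z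
      ≤ ∑' k, (testSet g k).indicator (fun _ => (1 : ℝ≥0∞)) Z := by
    intro Z
    by_cases hZ : Z ∈ E
    · rw [Set.indicator_of_mem hZ]
      obtain ⟨F, hcard, hF⟩ := hsub Z hZ
      calc (N : ℝ≥0∞) = ∑ k ∈ F, (testSet g k).indicator (fun _ => (1 : ℝ≥0∞)) Z := by
            rw [Finset.sum_congr rfl fun k hk => Set.indicator_of_mem (hF k hk) _]
            simp [hcard]
        _ ≤ _ := ENNReal.sum_le_tsum F
    · simp [Set.indicator_of_notMem hZ]
  calc (N : ℝ≥0∞) * lam E = ∫⁻ Z, E.indicator (fun _ => (N : ℝ≥0∞)) Z ∂lam := by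
        rw [lintegral_indicator_const hE]
    _ ≤ ∫⁻ Z, ∑' k, (testSet g k).indicator (fun _ => (1 : ℝ≥0∞)) Z ∂lam :=
        lintegral_mono key
    _ = ∑' k, ∫⁻ Z, (testSet g k).indicator (fun _ => (1 : ℝ≥0∞)) Z ∂lam :=
        lintegral_tsum fun k =>
          ((measurable_const.indicator (measurable_testSet g k))).aemeasurable
    _ = ∑' k, lam (testSet g k) := by
        refine tsum_congr fun k => ?_
        rw [lintegral_indicator_const (measurable_testSet g k), one_mul]

namespace CompAux
open Computable

variable {α β σ : Type*} [Primcodable α] [Primcodable β] [Primcodable σ]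

theorem clist_foldl {f : α → List β} {g : α → σ} {h : α → σ × β → σ}
    (hf : Computable f) (hg : Computable g) (hh : Computable₂ h) :
    Computable fun a => (f a).foldl (fun s b => h a (s, b)) (g a) := by
  let G : α → σ × List β → σ × List β := fun a IH =>
    Option.casesOn IH.2.head? IH fun b => (h a (IH.1, b), IH.2.tail)
  have hG : Computable₂ G := by
    apply Computable.option_casesOn
      (Primrec.list_head?.to_comp.comp (snd.comp snd)) snd
    exact Computable.pair
      (hh.comp (fst.comp fst) ((fst.comp (snd.comp fst)).pair snd))
      (Primrec.list_tail.to_comp.comp (snd.comp (snd.comp fst)))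
  have hF : Computable fun a =>
      (Nat.rec (motive := fun _ => σ × List β) (g a, f a)
        (fun _ IH => G a IH) ((f a).length) : σ × List β) :=
    Computable.nat_rec (Computable.list_length.comp hf) (hg.pair hf)
      ((hG.comp fst (snd.comp snd)).to₂)
  have inv : ∀ a n,
      (Nat.rec (motive := fun _ => σ × List β) (g a, f a)
        (fun _ IH => G a IH) n : σ × List β)
      = (((f a).take n).foldl (fun s b => h a (s, b)) (g a), (f a).drop n) := by
    intro a n
    induction n with
    | zero => simp
    | succ n IH =>
      rw [show (Nat.rec (motive := fun _ => σ × List β) (g a, f a)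
          (fun _ IH => G a IH) (n+1) : σ × List β)
          = G a (Nat.rec (motive := fun _ => σ × List β) (g a, f a)
          (fun _ IH => G a IH) n) from rfl, IH]
      cases hdrop : (f a).drop n with
      | nil =>
        have hlen : (f a).length ≤ n := List.drop_eq_nil_iff.mp hdrop
        simp only [G, hdrop, List.head?_nil]
        rw [List.take_of_length_le hlen, List.take_of_length_le (le_trans hlen (Nat.le_succ n)),
          List.drop_eq_nil_iff.mpr (le_trans hlen (Nat.le_succ n))]
      | cons b t =>
        have hget : (f a)[n]? = some b := by
          have := List.getElem?_drop (xs := f a) (i := n) (j := 0)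
          simpa [hdrop] using this.symm
        have htake : (f a).take (n+1) = (f a).take n ++ [b] := by
          rw [List.take_succ, hget]; rfl
        have hdrop2 : (f a).drop (n+1) = t := by
          have : (f a).drop (n+1) = ((f a).drop n).drop 1 := by
            rw [List.drop_drop]
          rw [this, hdrop]; rfl
        simp only [G, hdrop, List.head?_cons, List.tail_cons]
        rw [htake, List.foldl_append, hdrop2]
        rfl
  refine (Computable.fst.comp hF).of_eq fun a => ?_
  rw [inv a ((f a).length), List.take_of_length_le (le_refl _)]

theorem clist_map {f : α → List β} {h : α → β → σ}
    (hf : Computable f) (hh : Computable₂ h) :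
    Computable fun a => (f a).map (h a) := by
  have key : ∀ (a) (l : List β) (s : List σ),
      l.foldl (fun s b => s ++ [h a b]) s = s ++ l.map (h a) := by
    intro a l
    induction l with
    | nil => simp
    | cons b t IH => intro s; simp [IH]
  have := clist_foldl (h := fun a (p : List σ × β) => p.1 ++ [h a p.2])
    hf (Computable.const ([] : List σ))
    (Computable.list_concat.comp (fst.comp snd) (hh.comp fst (snd.comp snd)))
  refine this.of_eq fun a => ?_
  simp [key]


theorem ptake {γ : Type*} [Primcodable γ] :
    Primrec₂ fun (n : ℕ) (l : List γ) => l.take n := by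
  have key : ∀ (l : List γ) (n : ℕ) (acc : List γ),
      (l.foldl (fun (s : ℕ × List γ) b =>
        if s.1 = 0 then s else (s.1 - 1, s.2 ++ [b])) (n, acc)).2 = acc ++ l.take n := by
    intro l
    induction l with
    | nil => simp
    | cons b t IH =>
      intro n acc
      rcases n with _ | n
      · have aux : ∀ (t : List γ) (s : ℕ × List γ), s.1 = 0 →
            (t.foldl (fun (s : ℕ × List γ) b =>
              if s.1 = 0 then s else (s.1 - 1, s.2 ++ [b])) s) = s := by
          intro t
          induction t with
          | nil => intro s _; rfl
          | cons c u IHu => intro s hs; rw [List.foldl_cons, if_pos hs]; exact IHu s hs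
        rw [List.foldl_cons, if_pos rfl, aux t (0, acc) rfl]
        simp
      · rw [List.foldl_cons, if_neg (Nat.succ_ne_zero n)]
        simp only [Nat.add_sub_cancel]
        rw [IH n (acc ++ [b])]
        simp
  have hstep : Primrec₂ fun (_ : ℕ × List γ) (sb : (ℕ × List γ) × γ) =>
      if sb.1.1 = 0 then sb.1 else (sb.1.1 - 1, sb.1.2 ++ [sb.2]) := by
    have h1 : Primrec fun (sb : (ℕ × List γ) × γ) =>
        if sb.1.1 = 0 then sb.1 else (sb.1.1 - 1, sb.1.2 ++ [sb.2]) := by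
      apply Primrec.ite
      · exact PrimrecRel.comp Primrec.eq (Primrec.fst.comp Primrec.fst) (Primrec.const 0)
      · exact Primrec.fst
      · exact Primrec.pair
          (Primrec.nat_sub.comp (Primrec.fst.comp Primrec.fst) (Primrec.const 1))
          (Primrec.list_concat.comp (Primrec.snd.comp Primrec.fst) Primrec.snd)
    exact h1.comp Primrec.snd
  have h2 := Primrec.snd.comp
    (Primrec.list_foldl (Primrec.snd : Primrec fun p : ℕ × List γ => p.2)
      (Primrec.pair Primrec.fst (Primrec.const ([] : List γ))) hstep)
  exact (h2.of_eq fun p => by simp [key])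

theorem pprefix {γ : Type*} [Primcodable γ] [DecidableEq γ] :
    PrimrecRel fun (l₁ l₂ : List γ) => l₁ <+: l₂ := by
  have h : PrimrecRel fun (l₁ l₂ : List γ) => l₁ = l₂.take l₁.length :=
    PrimrecRel.comp Primrec.eq Primrec.fst
      ((ptake).comp (Primrec.list_length.comp Primrec.fst) Primrec.snd)
  exact h.of_eq fun l₁ l₂ => (List.prefix_iff_eq_take).symm

def inter2 : List Bool → List Bool → Option (List Bool) := fun σ τ =>
  if σ <+: τ then some τ else if τ <+: σ then some σ else none

theorem pinter2 : Primrec₂ inter2 := by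
  have h : Primrec fun p : List Bool × List Bool =>
      if p.1 <+: p.2 then some p.2 else if p.2 <+: p.1 then some p.1 else none := by
    apply Primrec.ite (pprefix.comp Primrec.fst Primrec.snd)
    · exact Primrec.option_some.comp Primrec.snd
    · apply Primrec.ite (pprefix.comp Primrec.snd Primrec.fst)
      · exact Primrec.option_some.comp Primrec.fst
      · exact Primrec.const none
  exact h

def stepC : Option (List Bool) → Option (List Bool) → Option (List Bool) := fun s o =>
  s.bind fun σ => o.bind fun τ => inter2 σ τ

theorem pstepC : Primrec₂ stepC := by
  have h : Primrec fun p : Option (List Bool) × Option (List Bool) =>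
      p.1.bind fun σ => p.2.bind fun τ => inter2 σ τ := by
    apply Primrec.option_bind Primrec.fst
    have h2 : Primrec fun (q : (Option (List Bool) × Option (List Bool)) × List Bool) =>
        q.1.2.bind fun τ => inter2 q.2 τ := by
      apply Primrec.option_bind (Primrec.snd.comp Primrec.fst)
      exact pinter2.comp (Primrec.snd.comp Primrec.fst) Primrec.snd
    exact h2
  exact h

def normGo : ℕ → List (ℕ × ℕ) → List (ℕ × ℕ)
  | _, [] => []
  | acc, p :: r => (acc + p.1, p.2) :: normGo (acc + p.1 + 1) r

theorem normGo_foldl : ∀ (l : List (ℕ × ℕ)) (acc : ℕ) (L : List (ℕ × ℕ)),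
    (l.foldl (fun (s : ℕ × List (ℕ × ℕ)) p =>
      (s.1 + p.1 + 1, s.2 ++ [(s.1 + p.1, p.2)])) (acc, L)).2 = L ++ normGo acc l := by
  intro l
  induction l with
  | nil => simp [normGo]
  | cons p r IH =>
    intro acc L
    simp only [List.foldl_cons, normGo]
    rw [IH]
    simp

theorem pnormGo : Primrec fun l => normGo 0 l := by
  have hstep : Primrec₂ fun (_ : List (ℕ × ℕ)) (sp : (ℕ × List (ℕ × ℕ)) × (ℕ × ℕ)) =>
      ((sp.1.1 + sp.2.1 + 1, sp.1.2 ++ [(sp.1.1 + sp.2.1, sp.2.2)]) : ℕ × List (ℕ × ℕ)) := by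
    have hsum : Primrec fun (sp : (ℕ × List (ℕ × ℕ)) × (ℕ × ℕ)) => sp.1.1 + sp.2.1 :=
      Primrec.nat_add.comp (Primrec.fst.comp Primrec.fst) (Primrec.fst.comp Primrec.snd)
    have h1 : Primrec fun (sp : (ℕ × List (ℕ × ℕ)) × (ℕ × ℕ)) =>
        ((sp.1.1 + sp.2.1 + 1, sp.1.2 ++ [(sp.1.1 + sp.2.1, sp.2.2)]) : ℕ × List (ℕ × ℕ)) :=
      Primrec.pair (Primrec.nat_add.comp hsum (Primrec.const 1))
        (Primrec.list_concat.comp (Primrec.snd.comp Primrec.fst)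
          (Primrec.pair hsum (Primrec.snd.comp Primrec.snd)))
    exact h1.comp Primrec.snd
  have h2 := Primrec.snd.comp
    (Primrec.list_foldl Primrec.id (Primrec.const ((0, []) : ℕ × List (ℕ × ℕ))) hstep)
  exact h2.of_eq fun l => by rw [normGo_foldl]; simp

/-- The ML test built from a Solovay test `g` and a constant `c`. -/
def solML (g : ℕ → ℕ → Option (List Bool)) (c : ℕ) : ℕ → ℕ → Option (List Bool) :=
  fun m j =>
    Option.casesOn (Encodable.decode (α := List (ℕ × ℕ)) j) none fun l₀ =>
      if (normGo 0 l₀).length = 2 ^ (m + c) then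
        ((normGo 0 l₀).map fun p => g p.1 p.2).foldl stepC (some [])
      else none

set_option maxHeartbeats 1000000 in
theorem computable_solML {g : ℕ → ℕ → Option (List Bool)} (hg : Computable₂ g) (c : ℕ) :
    Computable₂ (solML g c) := by
  have hpow : Primrec fun (x : (ℕ × ℕ) × List (ℕ × ℕ)) => 2 ^ (x.1.1 + c) :=
    (Primrec₂.unpaired'.mp Nat.Primrec.pow).comp (Primrec.const 2)
      (Primrec.nat_add.comp (Primrec.fst.comp Primrec.fst) (Primrec.const c))
  have hnorm : Primrec fun (x : (ℕ × ℕ) × List (ℕ × ℕ)) => normGo 0 x.2 :=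
    pnormGo.comp Primrec.snd
  have hcond : PrimrecPred fun (x : (ℕ × ℕ) × List (ℕ × ℕ)) =>
      (normGo 0 x.2).length = 2 ^ (x.1.1 + c) :=
    PrimrecRel.comp Primrec.eq (Primrec.list_length.comp hnorm) hpow
  have hfold : Primrec fun (L : List (Option (List Bool))) =>
      L.foldl stepC (some ([] : List Bool)) := by
    have h2 : Primrec fun (p : List (Option (List Bool)) ×
        (Option (List Bool) × Option (List Bool))) => stepC p.2.1 p.2.2 :=
      pstepC.comp (Primrec.fst.comp Primrec.snd) (Primrec.snd.comp Primrec.snd)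
    exact Primrec.list_foldl (h := fun _ sb => stepC sb.1 sb.2) Primrec.id
      (Primrec.const (some ([] : List Bool))) h2
  have hmap : Computable fun (x : (ℕ × ℕ) × List (ℕ × ℕ)) =>
      (normGo 0 x.2).map fun p => g p.1 p.2 :=
    clist_map hnorm.to_comp
      ((show Computable fun q : ℕ × ℕ => g q.1 q.2 from hg).comp Computable.snd)
  have hbody : Computable fun (x : (ℕ × ℕ) × List (ℕ × ℕ)) =>
      if (normGo 0 x.2).length = 2 ^ (x.1.1 + c) then
        ((normGo 0 x.2).map fun p => g p.1 p.2).foldl stepC (some [])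
      else none := by
    have hc2 : Computable fun (x : (ℕ × ℕ) × List (ℕ × ℕ)) =>
        decide ((normGo 0 x.2).length = 2 ^ (x.1.1 + c)) := hcond.decide.to_comp
    have := Computable.cond hc2 (hfold.to_comp.comp hmap)
      (Computable.const (none : Option (List Bool)))
    refine this.of_eq fun x => ?_
    by_cases h : (normGo 0 x.2).length = 2 ^ (x.1.1 + c) <;> simp [h]
  apply Computable₂.mk
  exact Computable.option_casesOn (Computable.decode.comp Computable.snd)
    (Computable.const none) (Computable.to₂ hbody)


lemma mem_testSet {f : ℕ → ℕ → Option (List Bool)} {m : ℕ} {Z : ℕ → Bool} :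
    Z ∈ testSet f m ↔ ∃ i σ, f m i = some σ ∧ Z ∈ cyl σ := by
  simp only [testSet, Set.mem_iUnion, Set.mem_setOf_eq]
  constructor
  · rintro ⟨σ, ⟨⟨i, hi⟩, hZ⟩⟩; exact ⟨i, σ, hi, hZ⟩
  · rintro ⟨i, σ, hi, hZ⟩; exact ⟨σ, ⟨⟨i, hi⟩, hZ⟩⟩

lemma normGo_length : ∀ (l : List (ℕ × ℕ)) (acc : ℕ), (normGo acc l).length = l.length := by
  intro l
  induction l with
  | nil => intro acc; rfl
  | cons p r IH => intro acc; simp [normGo, IH]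

lemma normGo_lb : ∀ (l : List (ℕ × ℕ)) (acc : ℕ) (q : ℕ × ℕ), q ∈ normGo acc l → acc ≤ q.1 := by
  intro l
  induction l with
  | nil => intro acc q h; simp [normGo] at h
  | cons p r IH =>
    intro acc q h
    rcases List.mem_cons.1 h with h | h
    · subst h; simp
    · have := IH (acc + p.1 + 1) q h; omega

lemma normGo_pairwise : ∀ (l : List (ℕ × ℕ)) (acc : ℕ),
    (normGo acc l).Pairwise (fun p q => p.1 < q.1) := by
  intro l
  induction l with
  | nil => intro acc; simp [normGo]
  | cons p r IH =>
    intro acc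
    refine List.Pairwise.cons ?_ (IH (acc + p.1 + 1))
    intro q hq
    have := normGo_lb r (acc + p.1 + 1) q hq
    simp; omega

lemma normGo_surj : ∀ (l' : List (ℕ × ℕ)), l'.Pairwise (fun p q => p.1 < q.1) →
    ∀ acc : ℕ, (∀ q ∈ l', acc ≤ q.1) → ∃ l, normGo acc l = l' := by
  intro l'
  induction l' with
  | nil => exact fun _ acc _ => ⟨[], rfl⟩
  | cons p r IH =>
    intro hpw acc hlb
    obtain ⟨hhead, hpw'⟩ := List.pairwise_cons.1 hpw
    have hacc : acc ≤ p.1 := hlb p (List.mem_cons_self)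
    obtain ⟨l, hl⟩ := IH hpw' (acc + (p.1 - acc) + 1) (fun q hq => by
      have := hhead q hq; omega)
    refine ⟨(p.1 - acc, p.2) :: l, ?_⟩
    simp only [normGo, hl]
    have h1 : acc + (p.1 - acc) = p.1 := by omega
    rw [h1]

lemma foldl_stepC_some : ∀ (L : List (Option (List Bool))) (s : Option (List Bool))
    (σ : List Bool), L.foldl stepC s = some σ →
    (∃ ρ, s = some ρ ∧ ρ <+: σ) ∧ ∀ o ∈ L, ∃ τ, o = some τ ∧ τ <+: σ := by
  intro L
  induction L with
  | nil =>
    intro s σ h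
    simp at h
    exact ⟨⟨σ, by rw [h], List.prefix_refl σ⟩, by simp⟩
  | cons o L IH =>
    intro s σ h
    rw [List.foldl_cons] at h
    obtain ⟨⟨ρ', hρ', hpre'⟩, htail⟩ := IH _ _ h
    -- stepC s o = some ρ'
    have hdec : ∃ ρ τ, s = some ρ ∧ o = some τ ∧ ρ <+: ρ' ∧ τ <+: ρ' := by
      rcases s with _ | ρ
      · simp [stepC] at hρ'
      rcases o with _ | τ
      · simp [stepC] at hρ'
      refine ⟨ρ, τ, rfl, rfl, ?_⟩
      simp only [stepC, Option.bind_some] at hρ'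
      unfold inter2 at hρ'
      by_cases h1 : ρ <+: τ
      · rw [if_pos h1] at hρ'
        obtain rfl : τ = ρ' := by injection hρ'
        exact ⟨h1, List.prefix_refl _⟩
      · rw [if_neg h1] at hρ'
        by_cases h2 : τ <+: ρ
        · rw [if_pos h2] at hρ'
          obtain rfl : ρ = ρ' := by injection hρ'
          exact ⟨List.prefix_refl _, h2⟩
        · rw [if_neg h2] at hρ'
          exact absurd hρ' (by simp)
    obtain ⟨ρ, τ, rfl, rfl, hρ, hτ⟩ := hdec
    refine ⟨⟨ρ, rfl, hρ.trans hpre'⟩, ?_⟩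
    intro o ho
    rcases List.mem_cons.1 ho with rfl | ho
    · exact ⟨τ, rfl, hτ.trans hpre'⟩
    · exact htail o ho

lemma foldl_stepC_exists {Z : ℕ → Bool} : ∀ (Ts : List (List Bool)),
    (∀ τ ∈ Ts, Z ∈ cyl τ) → ∀ ρ : List Bool, Z ∈ cyl ρ →
    ∃ σ, (Ts.map some).foldl stepC (some ρ) = some σ ∧ Z ∈ cyl σ := by
  intro Ts
  induction Ts with
  | nil => intro _ ρ hρ; exact ⟨ρ, rfl, hρ⟩
  | cons τ Ts IH =>
    intro hall ρ hρ
    have hτ : Z ∈ cyl τ := hall τ (List.mem_cons_self)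
    have hcomp := cyl_comparable hρ hτ
    rw [List.map_cons, List.foldl_cons]
    have hstep : ∃ ρ₂, stepC (some ρ) (some τ) = some ρ₂ ∧ Z ∈ cyl ρ₂ := by
      simp only [stepC, Option.bind_some]
      unfold inter2
      by_cases h1 : ρ <+: τ
      · rw [if_pos h1]; exact ⟨τ, rfl, hτ⟩
      · rcases hcomp with h | h
        · exact absurd h h1
        · rw [if_neg h1, if_pos h]; exact ⟨ρ, rfl, hρ⟩
    obtain ⟨ρ₂, hs, hZ2⟩ := hstep
    rw [hs]
    exact IH (fun τ' h' => hall τ' (List.mem_cons_of_mem _ h')) ρ₂ hZ2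

/-- Lemma B: membership in the converted test gives 2^(m+c) many Solovay sets. -/
lemma solML_subset {g : ℕ → ℕ → Option (List Bool)} {c m : ℕ} {Z : ℕ → Bool}
    (hZ : Z ∈ testSet (solML g c) m) :
    ∃ F : Finset ℕ, F.card = 2 ^ (m + c) ∧ ∀ k ∈ F, Z ∈ testSet g k := by
  obtain ⟨j, σ, hj, hcyl⟩ := mem_testSet.1 hZ
  unfold solML at hj
  rcases hdec : Encodable.decode (α := List (ℕ × ℕ)) j with _ | l₀
  · rw [hdec] at hj; exact absurd hj (by simp)
  rw [hdec] at hj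
  simp only at hj
  by_cases hlen : (normGo 0 l₀).length = 2 ^ (m + c)
  swap
  · rw [if_neg hlen] at hj; exact absurd hj (by simp)
  rw [if_pos hlen] at hj
  set l := normGo 0 l₀ with hl
  obtain ⟨-, hall⟩ := foldl_stepC_some _ _ _ hj
  have hnd : (l.map Prod.fst).Nodup := by
    have hpw := normGo_pairwise l₀ 0
    rw [← hl] at hpw
    exact (List.pairwise_map.2 hpw).imp Nat.ne_of_lt
  refine ⟨(l.map Prod.fst).toFinset, ?_, ?_⟩
  · rw [List.toFinset_card_of_nodup hnd, List.length_map, ← hlen]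
  · intro k hk
    rw [List.mem_toFinset, List.mem_map] at hk
    obtain ⟨p, hp, rfl⟩ := hk
    have : g p.1 p.2 ∈ l.map fun p => g p.1 p.2 := List.mem_map_of_mem hp
    obtain ⟨τ, hτeq, hτpre⟩ := hall _ this
    exact mem_testSet.2 ⟨p.2, τ, hτeq, cyl_anti hτpre hcyl⟩

/-- Lemma C: a point in infinitely many Solovay sets is in every converted test set. -/
lemma solML_mem {g : ℕ → ℕ → Option (List Bool)} {c : ℕ} {Z : ℕ → Bool}
    (hinf : {k | Z ∈ testSet g k}.Infinite) (m : ℕ) :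
    Z ∈ testSet (solML g c) m := by
  obtain ⟨F, hFsub, hFcard⟩ := hinf.exists_subset_card_eq (2 ^ (m + c))
  set ks := F.sort (· ≤ ·) with hks
  have hsorted : ks.Pairwise (· < ·) := F.sortedLT_sort.pairwise
  -- choose witnesses
  have hch : ∀ k : ℕ, ∃ p : ℕ × List Bool, k ∈ F → g k p.1 = some p.2 ∧ Z ∈ cyl p.2 := by
    intro k
    by_cases hk : k ∈ F
    · obtain ⟨i, σ, hi, hσ⟩ := mem_testSet.1 (hFsub hk)
      exact ⟨(i, σ), fun _ => ⟨hi, hσ⟩⟩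
    · exact ⟨(0, []), fun h => absurd h hk⟩
  choose w hw using hch
  set l' : List (ℕ × ℕ) := ks.map fun k => (k, (w k).1) with hl'
  have hpw : l'.Pairwise (fun p q => p.1 < q.1) := List.pairwise_map.2 hsorted
  obtain ⟨l₀, hl₀⟩ := normGo_surj l' hpw 0 (fun q _ => Nat.zero_le _)
  have hlen : (normGo 0 l₀).length = 2 ^ (m + c) := by
    rw [hl₀, hl', List.length_map, hks, Finset.length_sort, hFcard]
  have hmemF : ∀ k ∈ ks, k ∈ F := fun k hk => (Finset.mem_sort (α := ℕ) (· ≤ ·)).1 hk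
  have hmap : (normGo 0 l₀).map (fun p => g p.1 p.2) = (ks.map fun k => (w k).2).map some := by
    rw [hl₀, hl', List.map_map, List.map_map]
    refine List.map_congr_left fun k hk => ?_
    exact (hw k (hmemF k hk)).1
  have hZnil : Z ∈ cyl [] := fun i => Fin.elim0 i
  obtain ⟨σ, hfold, hZσ⟩ := foldl_stepC_exists (ks.map fun k => (w k).2)
    (by
      intro τ hτ
      rw [List.mem_map] at hτ
      obtain ⟨k, hk, rfl⟩ := hτ
      exact (hw k (hmemF k hk)).2) [] hZnil
  refine mem_testSet.2 ⟨Encodable.encode l₀, σ, ?_, hZσ⟩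
  unfold solML
  rw [Encodable.encodek]
  simp only
  rw [if_pos hlen, hmap, hfold]


end CompAux

open CompAux

/-- A Borel probability measure `μ` on Cantor space is
Martin-Löf absolutely continuous iff `μ` passes every Solovay test, i.e.
`μ (S_k) → 0`. -/
theorem stmt15 (lam : Measure (ℕ → Bool)) (hlam : IsFairCoin lam)
    (μ : Measure (ℕ → Bool)) [IsProbabilityMeasure μ] :
    MLAC lam μ ↔
      ∀ g, IsSolovayTest lam g →
        Filter.Tendsto (fun k => μ (testSet g k)) Filter.atTop (nhds 0) := by
  constructor
  · -- MLAC → passes every Solovay test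
    intro hml g hg
    obtain ⟨hgc, hgsum⟩ := hg
    by_contra hT
    rw [ENNReal.tendsto_atTop_zero] at hT
    push_neg at hT
    obtain ⟨ε, hε, hfreq⟩ := hT
    obtain ⟨c, hc0⟩ := ENNReal.exists_nat_gt hgsum.ne
    have hc : ∑' k, lam (testSet g k) ≤ 2 ^ c := by
      calc ∑' k, lam (testSet g k) ≤ (c : ℝ≥0∞) := hc0.le
        _ ≤ ((2 ^ c : ℕ) : ℝ≥0∞) := Nat.cast_le.2 (Nat.lt_two_pow_self (n := c)).le
        _ = 2 ^ c := by push_cast; rfl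
    set f := solML g c with hfdef
    have h2c_ne0 : ((2 : ℝ≥0∞) ^ c) ≠ 0 := pow_ne_zero c (by norm_num)
    have h2c_netop : ((2 : ℝ≥0∞) ^ c) ≠ ⊤ := ENNReal.pow_ne_top (by norm_num)
    have hlamBound : ∀ m, lam (testSet f m) ≤ 2⁻¹ ^ m := by
      intro m
      have hcb := count_bound lam g (2 ^ (m + c)) (testSet f m) (measurable_testSet f m)
        (fun Z hZ => solML_subset hZ)
      have hN : ((2 ^ (m + c) : ℕ) : ℝ≥0∞) = 2 ^ c * 2 ^ m := by
        push_cast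
        rw [pow_add, mul_comm]
      rw [hN] at hcb
      have hcb2 : (2 : ℝ≥0∞) ^ c * (2 ^ m * lam (testSet f m)) ≤ 2 ^ c * 1 := by
        rw [mul_one, ← mul_assoc]
        exact hcb.trans hc
      have hle1 : (2 : ℝ≥0∞) ^ m * lam (testSet f m) ≤ 1 :=
        (ENNReal.mul_le_mul_iff_right h2c_ne0 h2c_netop).1 hcb2
      have hinv : lam (testSet f m) ≤ ((2 : ℝ≥0∞) ^ m)⁻¹ :=
        ENNReal.le_inv_iff_mul_le.2 (by rwa [mul_comm])
      rw [← ENNReal.inv_pow]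
      exact hinv
    have hMLt : IsMLTest lam f := ⟨computable_solML hgc c, hlamBound⟩
    have h0 := hml f hMLt
    have hTmem : ∀ m, ε ≤ μ (testSet f m) := by
      intro m
      have hsub : {Z : ℕ → Bool | {k | Z ∈ testSet g k}.Infinite} ⊆ testSet f m :=
        fun Z hZ => solML_mem hZ m
      refine le_trans ?_ (measure_mono hsub)
      have hEq : {Z : ℕ → Bool | {k | Z ∈ testSet g k}.Infinite}
          = ⋂ n, ⋃ k, ⋃ (_ : n ≤ k), testSet g k := by
        ext Z
        simp only [Set.mem_setOf_eq, Set.mem_iInter, Set.mem_iUnion]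
        constructor
        · intro hinf n
          obtain ⟨k, hk, hlt⟩ := hinf.exists_gt n
          exact ⟨k, hlt.le, hk⟩
        · intro h
          apply Set.infinite_of_forall_exists_gt
          intro n
          obtain ⟨k, hk, hmem⟩ := h (n + 1)
          exact ⟨k, hmem, by omega⟩
      rw [hEq]
      have hU : ∀ n : ℕ, MeasurableSet (⋃ k, ⋃ (_ : n ≤ k), testSet g k) :=
        fun n => MeasurableSet.iUnion fun k =>
          MeasurableSet.iUnion fun _ => measurable_testSet g k
      have hanti : Antitone (fun n => ⋃ k, ⋃ (_ : n ≤ k), testSet g k) := by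
        intro a b hab
        exact Set.iUnion₂_mono' fun k hk => ⟨k, hab.trans hk, subset_rfl⟩
      have htend := tendsto_measure_iInter_atTop (μ := μ)
        (fun n => (hU n).nullMeasurableSet) hanti ⟨0, measure_ne_top μ _⟩
      refine ge_of_tendsto htend (Filter.Eventually.of_forall fun n => ?_)
      obtain ⟨k, hk, hεk⟩ := hfreq n
      calc ε ≤ μ (testSet g k) := hεk.le
        _ ≤ μ (⋃ k, ⋃ (_ : n ≤ k), testSet g k) :=
          measure_mono (Set.subset_iUnion₂ (s := fun k _ => testSet g k) k hk)
    have hfinal : ε ≤ 0 := h0 ▸ le_iInf hTmem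
    exact absurd (le_antisymm hfinal zero_le) (ne_of_gt hε)
  · -- passes every Solovay test → MLAC
    intro hsol f hf
    have hSolovay : IsSolovayTest lam f := by
      refine ⟨hf.1, ?_⟩
      calc ∑' k, lam (testSet f k) ≤ ∑' k : ℕ, 2⁻¹ ^ k := ENNReal.tsum_le_tsum hf.2
        _ = (1 - 2⁻¹)⁻¹ := ENNReal.tsum_geometric 2⁻¹
        _ < ⊤ := by
            rw [ENNReal.one_sub_inv_two]
            exact lt_top_iff_ne_top.2 (ENNReal.inv_ne_top.2 (by norm_num))
    have ht := hsol f hSolovay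
    refine le_antisymm ?_ zero_le
    by_contra hpos
    rw [not_le] at hpos
    have hne0 : (⨅ m, μ (testSet f m)) ≠ 0 := ne_of_gt hpos
    have hnetop : (⨅ m, μ (testSet f m)) ≠ ⊤ :=
      (lt_of_le_of_lt (iInf_le (fun m => μ (testSet f m)) 0) (measure_lt_top μ _)).ne
    rw [ENNReal.tendsto_atTop_zero] at ht
    obtain ⟨N, hN⟩ := ht ((⨅ m, μ (testSet f m)) / 2) (ENNReal.half_pos hne0)
    have := calc μ (testSet f N) ≤ (⨅ m, μ (testSet f m)) / 2 := hN N le_rfl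
      _ < ⨅ m, μ (testSet f m) := ENNReal.half_lt_self hne0 hnetop
      _ ≤ μ (testSet f N) := iInf_le (fun m => μ (testSet f m)) N
    exact absurd this (lt_irrefl _)
end

section
/- Let μ be a Borel probability measure on Cantor space, let δ > 0 be real, let m, t ∈ ℕ, let M be a finite index set of cardinality 2^m, and for each k ∈ M let S_k be a union of cylinders [σ] over a set of strings σ of length t, with μ(S_k) > δ for every k ∈ M. Let G be the union of all cylinders [σ] over strings σ of length t such that the number of k ∈ M with [σ] ⊆ S_k is at least δ·2^(m−1). Then μ(G) > δ/2 and λ(G) ≤ (∑_{k ∈ M} λ(S_k)) / (δ·2^(m−1)), where λ is the fair-coin measure. -/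
open MeasureTheory
open scoped ENNReal

/-- The cylinder of a string of length `t`, viewed as `σ : Fin t → Bool`. -/
def cylF {t : ℕ} (σ : Fin t → Bool) : Set (ℕ → Bool) :=
  {Z | ∀ i : Fin t, Z i = σ i}

lemma cylF_measurable {t : ℕ} (σ : Fin t → Bool) : MeasurableSet (cylF σ) := by
  have h : cylF σ = ⋂ i : Fin t, (fun Z : ℕ → Bool => Z i) ⁻¹' {σ i} := by
    ext Z; simp [cylF]
  rw [h]
  exact MeasurableSet.iInter fun i =>
    (measurable_pi_apply _) (MeasurableSet.singleton _)

lemma cylF_nonempty {t : ℕ} (σ : Fin t → Bool) : (cylF σ).Nonempty :=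
  ⟨fun n => if h : n < t then σ ⟨n, h⟩ else false, fun i => by simp [i.isLt]⟩

lemma cylF_disjoint {t : ℕ} {σ τ : Fin t → Bool} (h : σ ≠ τ) :
    Disjoint (cylF σ) (cylF τ) := by
  rw [Set.disjoint_left]
  intro Z hZσ hZτ
  exact h (funext fun i => (hZσ i).symm.trans (hZτ i))

lemma cylF_iUnion {t : ℕ} : ⋃ σ : Fin t → Bool, cylF σ = Set.univ := by
  ext Z
  simp only [Set.mem_iUnion, Set.mem_univ, iff_true]
  exact ⟨fun i => Z i, fun i => rfl⟩

lemma cylF_subset_iff {t : ℕ} (s : Set (Fin t → Bool)) (σ : Fin t → Bool) :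
    cylF σ ⊆ ⋃ τ ∈ s, cylF τ ↔ σ ∈ s := by
  constructor
  · intro h
    obtain ⟨Z, hZ⟩ := cylF_nonempty σ
    obtain ⟨τ, hτ, hZτ⟩ := Set.mem_iUnion₂.1 (h hZ)
    have : σ = τ := funext fun i => (hZ i).symm.trans (hZτ i)
    exact this ▸ hτ
  · intro h
    exact Set.subset_biUnion_of_mem h

lemma measure_cyl_union {t : ℕ} (ν : Measure (ℕ → Bool)) (s : Finset (Fin t → Bool)) :
    ν (⋃ σ ∈ s, cylF σ) = ∑ σ ∈ s, ν (cylF σ) :=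
  measure_biUnion_finset (fun _ _ _ _ h => cylF_disjoint h) (fun σ _ => cylF_measurable σ)

lemma sum_cylF_measure {t : ℕ} (ν : Measure (ℕ → Bool)) :
    ∑ σ : Fin t → Bool, ν (cylF σ) = ν Set.univ := by
  rw [← measure_cyl_union ν Finset.univ]
  congr 1
  rw [← cylF_iUnion (t := t)]
  simp

open scoped Classical in
lemma key_sum {t : ℕ} (ν : Measure (ℕ → Bool)) (A : Finset ℕ)
    (strs : ℕ → Set (Fin t → Bool)) :
    ∑ k ∈ A, ν (⋃ σ ∈ strs k, cylF σ)
      = ∑ σ : Fin t → Bool, (A.filter fun k => σ ∈ strs k).card * ν (cylF σ) := by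
  calc ∑ k ∈ A, ν (⋃ σ ∈ strs k, cylF σ)
      = ∑ k ∈ A, ∑ σ ∈ Finset.univ.filter (fun σ => σ ∈ strs k), ν (cylF σ) := by
        refine Finset.sum_congr rfl fun k _ => ?_
        rw [← measure_cyl_union]
        congr 1
        simp
    _ = ∑ k ∈ A, ∑ σ : Fin t → Bool, if σ ∈ strs k then ν (cylF σ) else 0 := by
        simp [Finset.sum_filter]
    _ = ∑ σ : Fin t → Bool, ∑ k ∈ A, if σ ∈ strs k then ν (cylF σ) else 0 :=
        Finset.sum_comm
    _ = ∑ σ : Fin t → Bool, (A.filter fun k => σ ∈ strs k).card * ν (cylF σ) := by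
        refine Finset.sum_congr rfl fun σ _ => ?_
        rw [← Finset.sum_filter, Finset.sum_const, nsmul_eq_mul]


open scoped Classical

/-- Let `μ` be a Borel probability measure on Cantor space,
`δ > 0`, `A` an index set of cardinality `2 ^ m`, and for `k ∈ A` let `S k`
be a union of cylinders of length-`t` strings with `μ (S k) > δ`.  Let `G`
be the union of the cylinders of length-`t` strings `σ` such that
`[σ] ⊆ S k` for at least `δ · 2 ^ (m - 1)` many `k ∈ A`.  Then
`μ (G) > δ / 2` and `λ (G) ≤ (∑_{k ∈ A} λ (S k)) / (δ · 2 ^ (m - 1))`. -/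
theorem stmt16 (lam μ : Measure (ℕ → Bool)) (hlam : IsFairCoin lam)
    [IsProbabilityMeasure μ]
    (δ : ℝ) (hδ : 0 < δ) (m t : ℕ) (A : Finset ℕ) (hA : A.card = 2 ^ m)
    (strs : ℕ → Set (Fin t → Bool)) (S : ℕ → Set (ℕ → Bool))
    (hS : ∀ k, S k = ⋃ σ ∈ strs k, cylF σ)
    (hμS : ∀ k ∈ A, ENNReal.ofReal δ < μ (S k))
    (G : Set (ℕ → Bool))
    (hG : G = ⋃ σ ∈ {σ : Fin t → Bool |
        δ * (2 : ℝ) ^ ((m : ℤ) - 1) ≤ {k ∈ (A : Set ℕ) | cylF σ ⊆ S k}.ncard},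
      cylF σ) :
    ENNReal.ofReal (δ / 2) < μ G ∧
      lam G ≤ (∑ k ∈ A, lam (S k)) / ENNReal.ofReal (δ * (2 : ℝ) ^ ((m : ℤ) - 1)) := by
  set c : ℝ := δ * (2 : ℝ) ^ ((m : ℤ) - 1) with hc_def
  have hcpos : 0 < c := by positivity
  set n : (Fin t → Bool) → ℕ := fun σ => (A.filter fun k => σ ∈ strs k).card with hn
  have hsubset : ∀ (σ : Fin t → Bool) k, cylF σ ⊆ S k ↔ σ ∈ strs k := fun σ k => by
    rw [hS]; exact cylF_subset_iff _ _
  have hncard : ∀ σ : Fin t → Bool,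
      {k ∈ (A : Set ℕ) | cylF σ ⊆ S k}.ncard = n σ := by
    intro σ
    have h1 : {k ∈ (A : Set ℕ) | cylF σ ⊆ S k} = ↑(A.filter fun k => σ ∈ strs k) := by
      ext k; simp [hsubset]
    rw [h1, Set.ncard_coe_finset]
  set good : Finset (Fin t → Bool) := Finset.univ.filter (fun σ => c ≤ (n σ : ℝ))
    with hgood
  have hGset : {σ : Fin t → Bool |
      δ * (2 : ℝ) ^ ((m : ℤ) - 1) ≤ {k ∈ (A : Set ℕ) | cylF σ ⊆ S k}.ncard}
      = ↑good := by
    ext σ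
    rw [Set.mem_setOf_eq, ← hc_def, hncard σ]
    simp [hgood]
  have hG' : ∀ ν : Measure (ℕ → Bool), ν G = ∑ σ ∈ good, ν (cylF σ) := by
    intro ν
    rw [hG, hGset]
    exact measure_cyl_union ν good
  have hkey : ∀ ν : Measure (ℕ → Bool),
      ∑ k ∈ A, ν (S k) = ∑ σ : Fin t → Bool, (n σ : ℝ≥0∞) * ν (cylF σ) := by
    intro ν
    have := key_sum ν A strs
    simp only [← hS] at this
    exact this
  -- constants
  set a : ℝ≥0∞ := ENNReal.ofReal (δ / 2) with ha_def
  set P : ℝ≥0∞ := 2 ^ m with hP_def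
  have hc2 : c = (δ / 2) * 2 ^ m := by
    rw [hc_def, zpow_sub₀ (two_ne_zero), zpow_one, zpow_natCast]; ring
  have hca : ENNReal.ofReal c = a * P := by
    rw [hc2, ENNReal.ofReal_mul (by positivity), ha_def, hP_def]
    congr 1
    rw [ENNReal.ofReal_pow (by norm_num)]
    norm_num
  have hP0 : P ≠ 0 := by
    rw [hP_def]; exact pow_ne_zero _ (by norm_num)
  have hPtop : P ≠ ∞ := by
    rw [hP_def]; exact ENNReal.pow_ne_top (by norm_num)
  have haPtop : a * P ≠ ∞ := ENNReal.mul_ne_top ENNReal.ofReal_ne_top hPtop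
  have hcast : ∀ σ, σ ∈ good → (n σ : ℝ≥0∞) ≤ P := by
    intro σ _
    have h1 : n σ ≤ 2 ^ m := hA ▸ Finset.card_filter_le A _
    calc (n σ : ℝ≥0∞) ≤ ((2 ^ m : ℕ) : ℝ≥0∞) := by exact_mod_cast h1
      _ = P := by rw [hP_def]; push_cast; ring
  have hgood_le : ∀ σ ∈ good, a * P ≤ (n σ : ℝ≥0∞) := by
    intro σ hσ
    have h1 : c ≤ (n σ : ℝ) := (Finset.mem_filter.1 hσ).2
    calc a * P = ENNReal.ofReal c := hca.symm
      _ ≤ ENNReal.ofReal (n σ : ℝ) := ENNReal.ofReal_le_ofReal h1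
      _ = (n σ : ℝ≥0∞) := ENNReal.ofReal_natCast _
  have hbad_le : ∀ σ ∈ Finset.univ.filter (fun σ => ¬ (c ≤ ((n σ : ℕ) : ℝ))),
      (n σ : ℝ≥0∞) ≤ a * P := by
    intro σ hσ
    have h1 : (n σ : ℝ) ≤ c := le_of_lt (lt_of_not_ge (Finset.mem_filter.1 hσ).2)
    calc (n σ : ℝ≥0∞) = ENNReal.ofReal (n σ : ℝ) := (ENNReal.ofReal_natCast _).symm
      _ ≤ ENNReal.ofReal c := ENNReal.ofReal_le_ofReal h1
      _ = a * P := hca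
  -- Part 1
  have hupper : ∑ k ∈ A, μ (S k) ≤ P * μ G + a * P := by
    rw [hkey μ, ← Finset.sum_filter_add_sum_filter_not Finset.univ
      (fun σ => c ≤ ((n σ : ℕ) : ℝ)) (fun σ => (n σ : ℝ≥0∞) * μ (cylF σ))]
    gcongr ?_ + ?_
    · calc ∑ σ ∈ good, (n σ : ℝ≥0∞) * μ (cylF σ)
          ≤ ∑ σ ∈ good, P * μ (cylF σ) := by
            refine Finset.sum_le_sum fun σ hσ => ?_
            exact mul_le_mul_left (hcast σ hσ) _
        _ = P * μ G := by rw [hG' μ, Finset.mul_sum]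
    · calc ∑ σ ∈ Finset.univ.filter (fun σ => ¬ (c ≤ ((n σ : ℕ) : ℝ))),
            (n σ : ℝ≥0∞) * μ (cylF σ)
          ≤ ∑ σ ∈ Finset.univ.filter (fun σ => ¬ (c ≤ ((n σ : ℕ) : ℝ))),
            (a * P) * μ (cylF σ) := by
            refine Finset.sum_le_sum fun σ hσ => ?_
            exact mul_le_mul_left (hbad_le σ hσ) _
        _ = (a * P) * ∑ σ ∈ Finset.univ.filter (fun σ => ¬ (c ≤ ((n σ : ℕ) : ℝ))),
            μ (cylF σ) := by rw [Finset.mul_sum]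
        _ ≤ (a * P) * 1 := by
            gcongr
            calc ∑ σ ∈ Finset.univ.filter (fun σ => ¬ (c ≤ ((n σ : ℕ) : ℝ))), μ (cylF σ)
                ≤ ∑ σ : Fin t → Bool, μ (cylF σ) :=
                  Finset.sum_le_sum_of_subset (Finset.filter_subset _ _)
              _ = μ Set.univ := sum_cylF_measure μ
              _ = 1 := measure_univ
        _ = a * P := mul_one _
  have hlower : P * (a + a) < ∑ k ∈ A, μ (S k) := by
    have hAne : A.Nonempty := by
      rw [← Finset.card_pos, hA]; positivity
    obtain ⟨k0, hk0⟩ := hAne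
    have hcfin : (∑ _k ∈ A.erase k0, ENNReal.ofReal δ) ≠ ∞ := by
      rw [Finset.sum_const, nsmul_eq_mul]
      exact ENNReal.mul_ne_top (ENNReal.natCast_ne_top _) ENNReal.ofReal_ne_top
    have h1 : ∑ _k ∈ A, ENNReal.ofReal δ < ∑ k ∈ A, μ (S k) := by
      rw [← Finset.add_sum_erase A (fun _ => ENNReal.ofReal δ) hk0,
        ← Finset.add_sum_erase A (fun k => μ (S k)) hk0]
      calc ENNReal.ofReal δ + ∑ _k ∈ A.erase k0, ENNReal.ofReal δ
          < μ (S k0) + ∑ _k ∈ A.erase k0, ENNReal.ofReal δ :=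
            (ENNReal.add_lt_add_iff_right hcfin).2 (hμS k0 hk0)
        _ ≤ μ (S k0) + ∑ k ∈ A.erase k0, μ (S k) := by
            gcongr with k hk
            exact (hμS k (Finset.mem_of_mem_erase hk)).le
    have h2 : ∑ _k ∈ A, ENNReal.ofReal δ = P * (a + a) := by
      rw [Finset.sum_const, hA, nsmul_eq_mul]
      congr 1
      · rw [hP_def]; push_cast; ring
      · rw [ha_def, ← ENNReal.ofReal_add (by positivity) (by positivity)]
        congr 1; ring
    rwa [h2] at h1
  have hmain : a < μ G := by
    have h3 : P * a + P * a < P * μ G + P * a := by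
      calc P * a + P * a = P * (a + a) := by ring
        _ < ∑ k ∈ A, μ (S k) := hlower
        _ ≤ P * μ G + a * P := hupper
        _ = P * μ G + P * a := by ring_nf
    have h4 : P * a < P * μ G :=
      (ENNReal.add_lt_add_iff_right
        (ENNReal.mul_ne_top hPtop ENNReal.ofReal_ne_top)).1 h3
    exact (ENNReal.mul_lt_mul_iff_right hP0 hPtop).1 h4
  refine ⟨hmain, ?_⟩
  -- Part 2
  have h2 : ENNReal.ofReal c * lam G ≤ ∑ k ∈ A, lam (S k) := by
    rw [hkey lam, hG' lam, Finset.mul_sum, hca]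
    calc ∑ σ ∈ good, (a * P) * lam (cylF σ)
        ≤ ∑ σ ∈ good, (n σ : ℝ≥0∞) * lam (cylF σ) := by
          refine Finset.sum_le_sum fun σ hσ => ?_
          exact mul_le_mul_left (hgood_le σ hσ) _
      _ ≤ ∑ σ : Fin t → Bool, (n σ : ℝ≥0∞) * lam (cylF σ) :=
          Finset.sum_le_sum_of_subset (Finset.subset_univ _)
  rw [ENNReal.le_div_iff_mul_le (Or.inl (by
      exact (ENNReal.ofReal_pos.2 hcpos).ne')) (Or.inl ENNReal.ofReal_ne_top)]
  rw [mul_comm]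
  exact h2
end
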